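/- arXiv:2101.05103 — 6 statements merged into one kernel-verified Lean document; each statement's English description precedes it below -/
import Mathlib

section
/- For every d ∈ ℕ and every α > 0 there exists a constant C > 0, depending only on d and α, such that for all s ≥ 1: s ∫_{[0,1]^d} e^{−α s |x|} dx ≤ C (1 + log s)^{d−1}. -/
open MeasureTheory

/-- The volume `|x| = x^(1) ⋯ x^(d)` of the box `[0,x]` for `x ∈ [0,1]^d`. -/
noncomputable def pvol {d : ℕ} (x : Fin d → ℝ) : ℝ := ∏ j, x j

/-- The unit cube `[0,1]^d`. -/
def cube (d : ℕ) : Set (Fin d → ℝ) := Set.Icc 0 1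

/-- The function `c_{α,s}(y) = s ∫_{[0,1]^d} 1_{x ⪰ y} e^{-α s |x|} dx`. -/
noncomputable def cAS {d : ℕ} (α s : ℝ) (y : Fin d → ℝ) : ℝ :=
  s * ∫ x in cube d,
    Set.indicator {x : Fin d → ℝ | y ≤ x} (fun x => Real.exp (-(α * s * pvol x))) x

namespace StmtAux


noncomputable def J (d : ℕ) (t : ℝ) : ℝ := ∫ x in cube d, Real.exp (-(t * pvol x))

lemma continuous_pvol (d : ℕ) : Continuous (pvol (d := d)) :=
  continuous_finset_prod _ fun i _ => continuous_apply i

lemma isCompact_cube (d : ℕ) : IsCompact (cube d) := isCompact_Icc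

lemma measurableSet_cube (d : ℕ) : MeasurableSet (cube d) := measurableSet_Icc

lemma pvol_nonneg {d : ℕ} {x : Fin d → ℝ} (hx : x ∈ cube d) : 0 ≤ pvol x :=
  Finset.prod_nonneg fun j _ => hx.1 j

lemma integrableOn_cube {d : ℕ} (t : ℝ) :
    IntegrableOn (fun x => Real.exp (-(t * pvol x))) (cube d) :=
  (Real.continuous_exp.comp ((continuous_const.mul (continuous_pvol d)).neg)).continuousOn.integrableOn_compact (isCompact_cube d)

lemma volume_cube (d : ℕ) : volume (cube d) = 1 := by
  simp [cube, Real.volume_Icc_pi]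

lemma J_nonneg (d : ℕ) (t : ℝ) : 0 ≤ J d t :=
  setIntegral_nonneg (measurableSet_cube d) fun x _ => (Real.exp_pos _).le

lemma J_le_one {d : ℕ} {t : ℝ} (ht : 0 ≤ t) : J d t ≤ 1 := by
  have h1 : J d t ≤ ∫ _x in cube d, (1:ℝ) := by
    refine setIntegral_mono_on (integrableOn_cube t)
      (integrableOn_const (isCompact_cube d).measure_lt_top.ne)
      (measurableSet_cube d) fun x hx => ?_
    exact Real.exp_le_one_iff.2 (by nlinarith [pvol_nonneg hx])
  simpa [measureReal_def, volume_cube d] using h1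

lemma J_antitone (d : ℕ) : Antitone (J d) := by
  intro t₁ t₂ h
  refine setIntegral_mono_on (integrableOn_cube t₂) (integrableOn_cube t₁)
    (measurableSet_cube d) fun x hx => ?_
  exact Real.exp_le_exp.2 (by nlinarith [pvol_nonneg hx])

lemma J_zero_dim (t : ℝ) : J 0 t = Real.exp (-t) := by
  have hc : cube 0 = Set.univ := Set.eq_univ_of_forall fun x => le_of_eq (Subsingleton.elim _ _) |>.trans_eq rfl |> fun h => ⟨h, le_of_eq (Subsingleton.elim _ _)⟩
  have hp : ∀ x : Fin 0 → ℝ, pvol x = 1 := fun x => by simp [pvol]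
  have hv : (volume : Measure (Fin 0 → ℝ)) Set.univ = 1 := by
    simp [volume_pi, Measure.pi_univ]
  simp [J, hc, hp, hv, measureReal_def]

lemma J_rec (d : ℕ) (t : ℝ) : J (d+1) t = ∫ y in Set.Icc (0:ℝ) 1, J d (t * y) := by
  classical
  set e := MeasurableEquiv.piFinSuccAbove (fun _ : Fin (d+1) => ℝ) 0 with he
  have hme : MeasurePreserving e volume volume := volume_preserving_piFinSuccAbove _ 0
  set f : (Fin (d+1) → ℝ) → ℝ := fun x => Real.exp (-(t * pvol x)) with hf
  set g : ℝ × (Fin d → ℝ) → ℝ := fun p => Real.exp (-(t * (p.1 * pvol p.2))) with hg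
  have hcont : Continuous g := by
    apply Real.continuous_exp.comp
    exact (continuous_const.mul (continuous_fst.mul ((continuous_pvol d).comp continuous_snd))).neg
  have key : ∀ p : ℝ × (Fin d → ℝ),
      (cube (d+1)).indicator f (e.symm p)
        = ((Set.Icc (0:ℝ) 1) ×ˢ cube d).indicator g p := by
    rintro ⟨y, z⟩
    have hsymm : e.symm (y, z) = Fin.cons y z := by
      simp [he, MeasurableEquiv.piFinSuccAbove_symm_apply, Fin.insertNthEquiv,
        Fin.insertNth_zero']
    have hmem : (Fin.cons y z : Fin (d+1) → ℝ) ∈ cube (d+1) ↔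
        (y, z) ∈ (Set.Icc (0:ℝ) 1) ×ˢ cube d := by
      simp only [cube, Set.mem_Icc, Set.mem_prod, Pi.le_def, Fin.forall_fin_succ,
        Fin.cons_zero, Fin.cons_succ, Pi.zero_apply, Pi.one_apply]
      tauto
    have hpv : pvol (Fin.cons y z : Fin (d+1) → ℝ) = y * pvol z := by
      simp [pvol, Fin.prod_cons]
    by_cases h : (y, z) ∈ (Set.Icc (0:ℝ) 1) ×ˢ cube d
    · rw [hsymm, Set.indicator_of_mem (hmem.2 h), Set.indicator_of_mem h]
      show Real.exp (-(t * pvol (Fin.cons y z))) = Real.exp (-(t * (y * pvol z)))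
      rw [hpv]
    · rw [hsymm, Set.indicator_of_notMem (fun hm => h (hmem.1 hm)), Set.indicator_of_notMem h]
  have hint : IntegrableOn g ((Set.Icc (0:ℝ) 1) ×ˢ cube d) := by
    exact hcont.continuousOn.integrableOn_compact (isCompact_Icc.prod isCompact_Icc)
  calc J (d+1) t = ∫ x, (cube (d+1)).indicator f x :=
        (integral_indicator (measurableSet_cube _)).symm
    _ = ∫ p : ℝ × (Fin d → ℝ), (cube (d+1)).indicator f (e.symm p) :=
        ((hme.symm e).integral_comp e.symm.measurableEmbedding _).symm
    _ = ∫ p : ℝ × (Fin d → ℝ), ((Set.Icc (0:ℝ) 1) ×ˢ cube d).indicator g p := by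
        simp_rw [key]
    _ = ∫ p in (Set.Icc (0:ℝ) 1) ×ˢ cube d, g p :=
        integral_indicator (measurableSet_Icc.prod (measurableSet_cube d))
    _ = ∫ y in Set.Icc (0:ℝ) 1, ∫ z in cube d, g (y, z) := by
        rw [Measure.volume_eq_prod, ← Measure.prod_restrict]
        refine integral_prod _ ?_
        rwa [Measure.prod_restrict, ← Measure.volume_eq_prod]
    _ = ∫ y in Set.Icc (0:ℝ) 1, J d (t * y) := by
        simp [hg, J, mul_assoc]


lemma base {t : ℝ} (ht : 1 ≤ t) : t * J 1 t ≤ 1 := by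
  have ht0 : 0 < t := lt_of_lt_of_le one_pos ht
  have h0 : J 1 t = ∫ y in Set.Icc (0:ℝ) 1, Real.exp (-(t*y)) := by
    rw [J_rec]
    refine setIntegral_congr_fun measurableSet_Icc fun y _ => ?_
    rw [J_zero_dim]
  have h1 : J 1 t = ∫ y in (0:ℝ)..1, Real.exp (-(t*y)) := by
    rw [h0, MeasureTheory.integral_Icc_eq_integral_Ioc,
      ← intervalIntegral.integral_of_le zero_le_one]
  have hF : ∀ y ∈ Set.uIcc (0:ℝ) 1,
      HasDerivAt (fun y => -Real.exp (-(t*y)) / t) (Real.exp (-(t*y))) y := by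
    intro y _
    have hd1 : HasDerivAt (fun y : ℝ => -(t*y)) (-t) y := by
      exact (((hasDerivAt_id y).const_mul t).neg).congr_deriv (by ring)
    have h2 := (Real.hasDerivAt_exp (-(t*y))).comp y hd1
    have h3 := h2.neg.div_const t
    refine h3.congr_deriv ?_
    field_simp
  have hcont : IntervalIntegrable (fun y => Real.exp (-(t*y))) volume 0 1 :=
    ((Real.continuous_exp.comp (continuous_const.mul continuous_id).neg).continuousOn).intervalIntegrable
  have h4 := intervalIntegral.integral_eq_sub_of_hasDerivAt hF hcont
  rw [h1, h4]
  have he1 : Real.exp (-(t*1)) = Real.exp (-t) := by norm_num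
  have he0 : Real.exp (-(t*0)) = 1 := by norm_num
  rw [he1, he0]
  have hexp : 0 < Real.exp (-t) := Real.exp_pos _
  have h5 : -Real.exp (-t) / t - -1 / t = (1 - Real.exp (-t)) / t := by ring
  have h6 : t * ((1 - Real.exp (-t)) / t) = 1 - Real.exp (-t) := by field_simp
  rw [h5, h6]
  linarith

lemma step {d k : ℕ} {C : ℝ} (hC : 0 < C)
    (h : ∀ u : ℝ, 1 ≤ u → u * J d u ≤ C * (1 + Real.log u)^k) :
    ∀ t : ℝ, 1 ≤ t → t * J (d+1) t ≤ (1 + C) * (1 + Real.log t)^(k+1) := by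
  intro t ht
  have ht0 : 0 < t := lt_of_lt_of_le one_pos ht
  set a := 1 + Real.log t with ha
  have ha1 : 1 ≤ a := by
    have := Real.log_nonneg ht
    simp only [ha]; linarith
  have h1t0 : (0:ℝ) < 1/t := by positivity
  have h1t1 : 1/t ≤ 1 := by rw [div_le_one ht0]; exact ht
  have hg : Antitone (fun y => J d (t * y)) := fun y₁ y₂ hy =>
    J_antitone d (by nlinarith)
  have hrec : J (d+1) t = ∫ y in (0:ℝ)..1, J d (t*y) := by
    rw [J_rec, MeasureTheory.integral_Icc_eq_integral_Ioc,
      ← intervalIntegral.integral_of_le zero_le_one]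
  have hsplit : ∫ y in (0:ℝ)..1, J d (t*y)
      = (∫ y in (0:ℝ)..(1/t), J d (t*y)) + ∫ y in (1/t)..1, J d (t*y) :=
    (intervalIntegral.integral_add_adjacent_intervals
      (hg.intervalIntegrable) (hg.intervalIntegrable)).symm
  have hb1 : ∫ y in (0:ℝ)..(1/t), J d (t*y) ≤ 1/t := by
    have hmono := intervalIntegral.integral_mono_on (μ := volume) h1t0.le
      (hg.intervalIntegrable) intervalIntegrable_const
      (fun y hy => J_le_one (d := d) (t := t*y) (by nlinarith [hy.1]))
    simpa using hmono
  -- the majorant on the second interval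
  set F : ℝ → ℝ := fun y => C * (a + Real.log y)^k / (t*y) with hFdef
  have hposset : ∀ y ∈ Set.uIcc (1/t) 1, 0 < y := by
    intro y hy
    rw [Set.uIcc_of_le h1t1] at hy
    exact lt_of_lt_of_le h1t0 hy.1
  have hFcont : ContinuousOn F (Set.uIcc (1/t) 1) := by
    apply ContinuousOn.div
    · exact continuousOn_const.mul ((continuousOn_const.add (Real.continuousOn_log.mono
        (fun y hy => by simpa using (hposset y hy).ne'))).pow k)
    · exact continuousOn_const.mul continuousOn_id
    · intro y hy
      exact (mul_pos ht0 (hposset y hy)).ne'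
  have hb2 : ∫ y in (1/t)..1, J d (t*y) ≤ ∫ y in (1/t)..1, F y := by
    refine intervalIntegral.integral_mono_on h1t1 (hg.intervalIntegrable)
      (hFcont.intervalIntegrable) fun y hy => ?_
    have hy0 : 0 < y := lt_of_lt_of_le h1t0 hy.1
    have hty : 1 ≤ t * y := by
      have h1 := hy.1
      rw [div_le_iff₀ ht0] at h1
      linarith
    have hu := h (t*y) hty
    have hlog : 1 + Real.log (t*y) = a + Real.log y := by
      rw [Real.log_mul ht0.ne' hy0.ne', ha]; ring
    rw [hlog] at hu
    rw [hFdef]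
    rw [le_div_iff₀ (by positivity)]
    nlinarith [hu]
  -- compute the integral of the majorant
  have hG : ∀ y ∈ Set.uIcc (1/t) 1,
      HasDerivAt (fun y => (a + Real.log y)^(k+1) / (k+1))
        ((a + Real.log y)^k * y⁻¹) y := by
    intro y hy
    have hy0 : 0 < y := hposset y hy
    have hd1 : HasDerivAt (fun y => a + Real.log y) y⁻¹ y :=
      (Real.hasDerivAt_log hy0.ne').const_add a
    have h2 := (hd1.pow (k+1)).div_const ((k:ℝ)+1)
    have hk : ((k:ℝ)+1) ≠ 0 := by positivity
    refine h2.congr_deriv ?_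
    push_cast
    field_simp
  have hGcont : ContinuousOn (fun y => (a + Real.log y)^k * y⁻¹) (Set.uIcc (1/t) 1) := by
    apply ContinuousOn.mul
    · exact (continuousOn_const.add (Real.continuousOn_log.mono
        (fun y hy => by simpa using (hposset y hy).ne'))).pow k
    · exact continuousOn_id.inv₀ fun y hy => (hposset y hy).ne'
  have hcalc := intervalIntegral.integral_eq_sub_of_hasDerivAt hG hGcont.intervalIntegrable
  have hinv : a + Real.log (1/t) = 1 := by
    rw [one_div, Real.log_inv, ha]; ring
  have hcalc2 : ∫ y in (1/t)..1, (a + Real.log y)^k * y⁻¹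
      = (a^(k+1) - 1) / (k+1) := by
    rw [hcalc, hinv]
    norm_num
    ring
  have hFeq : ∀ y : ℝ, F y = (C/t) * ((a + Real.log y)^k * y⁻¹) := by
    intro y
    rw [hFdef]
    simp only [div_eq_mul_inv, mul_inv]
    ring
  have hFint : ∫ y in (1/t)..1, F y = (C/t) * ((a^(k+1) - 1)/(k+1)) := by
    simp_rw [hFeq]
    rw [intervalIntegral.integral_const_mul, hcalc2]
  -- put everything together
  have hpow1 : (1:ℝ) ≤ a^(k+1) := one_le_pow₀ ha1
  have htot : J (d+1) t ≤ 1/t + (C/t) * ((a^(k+1) - 1)/(k+1)) := by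
    rw [hrec, hsplit]
    have := hb2.trans_eq hFint
    linarith
  have hk1 : (1:ℝ) ≤ (k:ℝ)+1 := by
    have := Nat.cast_nonneg (α := ℝ) k
    linarith
  have hdiv : (a^(k+1) - 1)/((k:ℝ)+1) ≤ a^(k+1) := by
    have h1 : (a^(k+1) - 1)/((k:ℝ)+1) ≤ a^(k+1) - 1 :=
      div_le_self (by linarith) hk1
    linarith
  calc t * J (d+1) t ≤ t * (1/t + (C/t) * ((a^(k+1) - 1)/(k+1))) := by
        nlinarith [htot]
    _ = 1 + C * ((a^(k+1) - 1)/((k:ℝ)+1)) := by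
        push_cast
        field_simp
    _ ≤ 1 + C * a^(k+1) := by nlinarith [hdiv]
    _ ≤ (1 + C) * a^(k+1) := by nlinarith [hpow1]

lemma key (n : ℕ) : ∃ C : ℝ, 0 < C ∧ ∀ t : ℝ, 1 ≤ t →
    t * J (n+1) t ≤ C * (1 + Real.log t)^n := by
  induction n with
  | zero => exact ⟨1, one_pos, fun t ht => by simpa using base ht⟩
  | succ n ih =>
    obtain ⟨C, hC, h⟩ := ih
    exact ⟨1 + C, by linarith, step hC h⟩


end StmtAux

open StmtAux in
/-- For every `d ∈ ℕ` and `α > 0` there exists `C > 0` depending only on `d` and `α`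
such that `s ∫_{[0,1]^d} e^{-α s |x|} dx ≤ C (1 + log s)^{d-1}` for all `s ≥ 1`. -/
theorem stmt2 (d : ℕ) (hd : 1 ≤ d) (α : ℝ) (hα : 0 < α) :
    ∃ C : ℝ, 0 < C ∧ ∀ s : ℝ, 1 ≤ s →
      s * ∫ x in cube d, Real.exp (-(α * s * pvol x)) ≤
        C * (1 + Real.log s) ^ (d - 1) := by
  obtain ⟨n, rfl⟩ : ∃ n, d = n + 1 := ⟨d - 1, (Nat.succ_pred_eq_of_pos hd).symm⟩
  obtain ⟨C₀, hC₀, h⟩ := key n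
  refine ⟨(C₀ + 1)/α * (1 + |Real.log α|)^n, by positivity, ?_⟩
  intro s hs
  have hs0 : 0 < s := lt_of_lt_of_le one_pos hs
  have habs : (0:ℝ) ≤ |Real.log α| := abs_nonneg _
  have hpow1 : (1:ℝ) ≤ (1 + |Real.log α|)^n := one_le_pow₀ (by linarith)
  have hlogs : 0 ≤ Real.log s := Real.log_nonneg hs
  have hpow2 : (1:ℝ) ≤ (1 + Real.log s)^n := one_le_pow₀ (by linarith)
  have hgoal : s * ∫ x in cube (n+1), Real.exp (-(α * s * pvol x))
      = s * J (n+1) (α * s) := rfl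
  rw [hgoal]
  simp only [Nat.add_sub_cancel]
  by_cases hcase : 1 ≤ α * s
  · have hb := h (α * s) hcase
    have has : 0 < α * s := by positivity
    have hJ : J (n+1) (α*s) ≤ C₀ * (1 + Real.log (α*s))^n / (α*s) := by
      rw [le_div_iff₀ has]
      nlinarith [hb]
    have hlog : 1 + Real.log (α*s) ≤ (1 + |Real.log α|) * (1 + Real.log s) := by
      rw [Real.log_mul hα.ne' hs0.ne']
      nlinarith [le_abs_self (Real.log α)]
    have hlognn : 0 ≤ 1 + Real.log (α*s) := by
      have := Real.log_nonneg hcase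
      linarith
    have hpow : (1 + Real.log (α*s))^n ≤ ((1 + |Real.log α|) * (1 + Real.log s))^n :=
      pow_le_pow_left₀ hlognn hlog n
    calc s * J (n+1) (α*s) ≤ s * (C₀ * (1 + Real.log (α*s))^n / (α*s)) :=
          mul_le_mul_of_nonneg_left hJ hs0.le
      _ = (C₀/α) * (1 + Real.log (α*s))^n := by
          field_simp
      _ ≤ (C₀/α) * ((1 + |Real.log α|) * (1 + Real.log s))^n := by
          have hCα : 0 ≤ C₀/α := by positivity
          exact mul_le_mul_of_nonneg_left hpow hCα
      _ = (C₀/α) * ((1 + |Real.log α|)^n * (1 + Real.log s)^n) := by rw [mul_pow]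
      _ ≤ (C₀ + 1)/α * (1 + |Real.log α|)^n * (1 + Real.log s)^n := by
          have h1 : C₀/α ≤ (C₀+1)/α := by
            rw [div_le_div_iff₀ hα hα]
            nlinarith
          have hq : (0:ℝ) ≤ (1 + |Real.log α|)^n * (1 + Real.log s)^n := by positivity
          rw [mul_assoc]
          exact mul_le_mul_of_nonneg_right h1 hq
  · push_neg at hcase
    have hJ1 : J (n+1) (α*s) ≤ 1 := J_le_one (by positivity)
    have hs2 : s ≤ 1/α := by
      rw [le_div_iff₀ hα]
      nlinarith
    have h1 : s * J (n+1) (α*s) ≤ s :=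
      le_trans (mul_le_mul_of_nonneg_left hJ1 hs0.le) (by linarith)
    have h2 : (1:ℝ)/α ≤ (C₀ + 1)/α * (1 + |Real.log α|)^n * (1 + Real.log s)^n := by
      have hA : (1:ℝ)/α ≤ (C₀+1)/α := by
        rw [div_le_div_iff₀ hα hα]
        nlinarith
      have hB : (C₀+1)/α ≤ (C₀+1)/α * (1 + |Real.log α|)^n :=
        le_mul_of_one_le_right (by positivity) hpow1
      have hC : (C₀+1)/α * (1 + |Real.log α|)^n
          ≤ (C₀+1)/α * (1 + |Real.log α|)^n * (1 + Real.log s)^n :=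
        le_mul_of_one_le_right (by positivity) hpow2
      linarith
    linarith
end

section
/- For every d ∈ ℕ there exists a constant D > 0, depending only on d, such that for all α > 0, all s > 0 and all y ∈ [0,1]^d with |y| > 0: c_{α,s}(y) ≤ (D/α) e^{−α s |y|/2} [ 1 + |log(α s |y|)|^{d−1} ]. -/
open MeasureTheory

noncomputable def fI (t : ℝ) (i : ℕ) (w : ℝ) : ℝ := Real.exp (-(t*w)) * (Real.log w)^i

noncomputable def Th (t : ℝ) (k : ℕ) (u : ℝ) : ℝ :=
  ∫ w in u..1, Real.exp (-(t*w)) * (Real.log (w/u))^k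

lemma mem_uIcc_pos {a b w : ℝ} (ha : 0 < a) (hb : 0 < b) (hw : w ∈ Set.uIcc a b) : 0 < w :=
  lt_of_lt_of_le (lt_inf_iff.mpr ⟨ha, hb⟩) hw.1

lemma fI_contOn (t : ℝ) (i : ℕ) : ContinuousOn (fI t i) {0}ᶜ := by
  apply ContinuousOn.mul
  · exact (Real.continuous_exp.comp (continuous_const.mul continuous_id).neg).continuousOn
  · exact Real.continuousOn_log.pow i

lemma fI_intble (t : ℝ) (i : ℕ) {a b : ℝ} (ha : 0 < a) (hb : 0 < b) :
    IntervalIntegrable (fI t i) volume a b := by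
  apply ContinuousOn.intervalIntegrable
  apply (fI_contOn t i).mono
  intro w hw
  exact Set.mem_compl_singleton_iff.mpr (mem_uIcc_pos ha hb hw).ne'

lemma expand (t : ℝ) (k : ℕ) {u a b : ℝ} (hu : 0 < u) (ha : 0 < a) (hb : 0 < b) :
    (∫ w in a..b, Real.exp (-(t*w)) * (Real.log (w/u))^k)
      = ∑ j ∈ Finset.range (k+1),
          (k.choose j : ℝ) * (-Real.log u)^j * ∫ w in a..b, fI t (k-j) w := by
  have h1 : ∀ j ∈ Finset.range (k+1),
      ((k.choose j : ℝ) * (-Real.log u)^j * ∫ w in a..b, fI t (k-j) w)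
      = ∫ w in a..b, (k.choose j : ℝ) * (-Real.log u)^j * fI t (k-j) w := fun j _ =>
    (intervalIntegral.integral_const_mul _ _).symm
  rw [Finset.sum_congr rfl h1, ← intervalIntegral.integral_finset_sum]
  · apply intervalIntegral.integral_congr
    intro w hw
    have hw0 : 0 < w := mem_uIcc_pos ha hb hw
    have hlog : Real.log (w/u) = (-Real.log u) + Real.log w := by
      rw [Real.log_div hw0.ne' hu.ne']; ring
    simp only [hlog, add_pow, Finset.mul_sum]
    apply Finset.sum_congr rfl
    intro j hj
    simp only [fI]
    ring
  · intro j hj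
    exact (fI_intble t (k-j) ha hb).const_mul _

lemma Th_expand (t : ℝ) (k : ℕ) {u : ℝ} (hu : 0 < u) :
    Th t k u = ∑ j ∈ Finset.range (k+1),
      (k.choose j : ℝ) * (-Real.log u)^j * ∫ w in u..1, fI t (k-j) w :=
  expand t k hu hu one_pos

lemma A_hasDeriv (t : ℝ) (i : ℕ) {u : ℝ} (hu : 0 < u) :
    HasDerivAt (fun u => ∫ w in u..(1:ℝ), fI t i w) (-(fI t i u)) u :=
  intervalIntegral.integral_hasDerivAt_left (fI_intble t i hu one_pos)
    ((fI_contOn t i).stronglyMeasurableAtFilter isOpen_compl_singleton _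
      (Set.mem_compl_singleton_iff.mpr hu.ne'))
    ((fI_contOn t i).continuousAt (compl_singleton_mem_nhds hu.ne'))
lemma Th_hasDeriv (t : ℝ) (k : ℕ) {u : ℝ} (hu : 0 < u) :
    HasDerivAt (Th t (k+1)) (-((k+1:ℝ)/u) * Th t k u) u := by
  set L := Real.log u with hL
  set A : ℕ → ℝ := fun i => ∫ w in u..(1:ℝ), fI t i w with hA
  have hE : HasDerivAt (fun v => ∑ j ∈ Finset.range (k+2),
      ((k+1).choose j : ℝ) * (-Real.log v)^j * ∫ w in v..(1:ℝ), fI t (k+1-j) w)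
      (∑ j ∈ Finset.range (k+2),
        ((((k+1).choose j : ℝ) * ((j : ℝ) * (-L)^(j-1) * (-u⁻¹))) * A (k+1-j)
          + (((k+1).choose j : ℝ) * (-L)^j) * (-(fI t (k+1-j) u)))) u := by
    apply HasDerivAt.fun_sum
    intro j hj
    exact (((Real.hasDerivAt_log hu.ne').neg.pow j).const_mul
      (((k+1).choose j : ℝ))).mul (A_hasDeriv t (k+1-j) hu)
  have heq : (fun v => Th t (k+1) v) =ᶠ[nhds u] (fun v => ∑ j ∈ Finset.range (k+2),
      ((k+1).choose j : ℝ) * (-Real.log v)^j * ∫ w in v..(1:ℝ), fI t (k+1-j) w) := by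
    filter_upwards [isOpen_Ioi.mem_nhds (Set.mem_Ioi.mpr hu)] with v hv
    exact Th_expand t (k+1) hv
  have hval : (∑ j ∈ Finset.range (k+2),
        ((((k+1).choose j : ℝ) * ((j : ℝ) * (-L)^(j-1) * (-u⁻¹))) * A (k+1-j)
          + (((k+1).choose j : ℝ) * (-L)^j) * (-(fI t (k+1-j) u))))
      = -((k+1:ℝ)/u) * Th t k u := by
    rw [Finset.sum_add_distrib]
    have h2 : (∑ j ∈ Finset.range (k+2),
        (((k+1).choose j : ℝ) * (-L)^j) * (-(fI t (k+1-j) u))) = 0 := by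
      have : ∀ j ∈ Finset.range (k+2),
          (((k+1).choose j : ℝ) * (-L)^j) * (-(fI t (k+1-j) u))
            = -Real.exp (-(t*u)) * ((-L)^j * L^(k+1-j) * ((k+1).choose j : ℝ)) := by
        intro j hj
        simp only [fI, hL]
        ring
      rw [Finset.sum_congr rfl this, ← Finset.mul_sum, ← add_pow]
      simp
    rw [h2, add_zero]
    have h1 : ∀ i ∈ Finset.range (k+1),
        ((((k+1).choose (i+1) : ℝ) * (((i+1 : ℕ) : ℝ) * (-L)^((i+1)-1) * (-u⁻¹))) * A (k+1-(i+1)))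
          = -((k+1:ℝ)/u) * ((k.choose i : ℝ) * (-L)^i * A (k-i)) := by
      intro i hi
      have hc : ((k+1).choose (i+1) : ℝ) * ((i+1 : ℕ) : ℝ) = ((k+1 : ℕ) : ℝ) * (k.choose i : ℝ) := by
        rw [← Nat.cast_mul, ← Nat.cast_mul, ← Nat.add_one_mul_choose_eq]
      have hs : k+1-(i+1) = k-i := by omega
      rw [hs]
      push_cast at hc ⊢
      linear_combination ((-L)^i * (-u⁻¹) * A (k-i)) * hc
    rw [Finset.sum_range_succ']
    simp only [Nat.cast_zero, zero_mul, mul_zero, add_zero]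
    rw [Finset.sum_congr rfl h1, ← Finset.mul_sum, ← Th_expand t k hu]
  exact (hE.congr_of_eventuallyEq heq).congr_deriv hval
noncomputable def Psi (t m' : ℝ) (k : ℕ) (x : ℝ) : ℝ :=
  ∫ v in m'..1, Real.exp (-(t*x*v)) * (Real.log (v/m'))^k

lemma integrand_intble (t : ℝ) (k : ℕ) {u a b : ℝ} (hu : 0 < u) (ha : 0 < a) (hb : 0 < b) :
    IntervalIntegrable (fun w => Real.exp (-(t*w)) * (Real.log (w/u))^k) volume a b := by
  apply ContinuousOn.intervalIntegrable
  apply ContinuousOn.mul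
  · exact (Real.continuous_exp.comp (continuous_const.mul continuous_id).neg).continuousOn
  · apply ContinuousOn.pow
    apply Real.continuousOn_log.comp (continuous_id.div_const u).continuousOn
    intro w hw
    exact Set.mem_compl_singleton_iff.mpr
      (div_ne_zero (mem_uIcc_pos ha hb hw).ne' hu.ne')

lemma Th_nonneg (t : ℝ) (k : ℕ) {u : ℝ} (hu0 : 0 < u) (hu1 : u ≤ 1) : 0 ≤ Th t k u := by
  apply intervalIntegral.integral_nonneg hu1
  intro w hw
  have h1 : 1 ≤ w/u := (le_div_iff₀ hu0).mpr (by linarith [hw.1])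
  exact mul_nonneg (Real.exp_pos _).le (pow_nonneg (Real.log_nonneg h1) k)

lemma Psi_repr (t m' : ℝ) (k : ℕ) {x : ℝ} (hx : 0 < x) (hm : 0 < m') :
    Psi t m' k x = x⁻¹ * ∫ w in (x*m')..x, Real.exp (-(t*w)) * (Real.log (w/(x*m')))^k := by
  have h : ∀ v : ℝ, Real.exp (-(t*x*v)) * (Real.log (v/m'))^k
      = (fun w => Real.exp (-(t*w)) * (Real.log (w/(x*m')))^k) (x*v) := by
    intro v
    simp only
    rw [show (x*v)/(x*m') = v/m' from mul_div_mul_left _ _ hx.ne', mul_assoc]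
  unfold Psi
  simp only [h]
  have hc := intervalIntegral.integral_comp_mul_left
    (fun w => Real.exp (-(t*w)) * (Real.log (w/(x*m')))^k) hx.ne' (a := m') (b := 1)
  rw [hc]
  simp [smul_eq_mul]

lemma P_contAt (t : ℝ) (i : ℕ) {z : ℝ} (hz : 0 < z) :
    ContinuousAt (fun z => ∫ w in (1:ℝ)..z, fI t i w) z :=
  (intervalIntegral.integral_hasDerivAt_right (fI_intble t i one_pos hz)
    ((fI_contOn t i).stronglyMeasurableAtFilter isOpen_compl_singleton _
      (Set.mem_compl_singleton_iff.mpr hz.ne'))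
    ((fI_contOn t i).continuousAt (compl_singleton_mem_nhds hz.ne'))).continuousAt

lemma Psi_contAt (t m' : ℝ) (k : ℕ) {x : ℝ} (hx : 0 < x) (hm : 0 < m') :
    ContinuousAt (Psi t m' k) x := by
  have hG : ContinuousAt (fun x : ℝ => x⁻¹ * ∑ j ∈ Finset.range (k+1),
      (k.choose j : ℝ) * (-Real.log (x*m'))^j *
      ((∫ w in (1:ℝ)..x, fI t (k-j) w) - ∫ w in (1:ℝ)..(x*m'), fI t (k-j) w)) x := by
    apply ContinuousAt.mul (continuousAt_id.inv₀ hx.ne')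
    apply tendsto_finset_sum
    intro j _
    have hmul : ContinuousAt (fun y : ℝ => y * m') x := continuousAt_id.mul continuousAt_const
    have hlog : ContinuousAt (fun y : ℝ => Real.log (y * m')) x :=
      ContinuousAt.comp (f := fun y : ℝ => y * m') (Real.continuousAt_log (mul_pos hx hm).ne') hmul
    have hP : ContinuousAt (fun y : ℝ => ∫ w in (1:ℝ)..(y*m'), fI t (k-j) w) x :=
      ContinuousAt.comp (f := fun y : ℝ => y * m') (P_contAt t (k-j) (mul_pos hx hm)) hmul
    exact (continuousAt_const.mul (hlog.neg.pow j)).mul ((P_contAt t (k-j) hx).sub hP)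
  apply hG.congr
  filter_upwards [isOpen_Ioi.mem_nhds (Set.mem_Ioi.mpr hx)] with z hz
  rw [Psi_repr t m' k hz hm, expand t k (mul_pos hz hm) (mul_pos hz hm) hz]
  congr 1
  apply Finset.sum_congr rfl
  intro j _
  congr 1
  rw [intervalIntegral.integral_interval_sub_left (fI_intble t _ one_pos hz)
    (fI_intble t _ one_pos (mul_pos hz hm))]
lemma Psi_le (t m' : ℝ) (k : ℕ) {b : ℝ} (hb0 : 0 < b) (hb1 : b ≤ 1)
    (hm0 : 0 < m') (hm1 : m' ≤ 1) :
    Psi t m' k b ≤ b⁻¹ * Th t k (b*m') := by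
  rw [Psi_repr t m' k hb0 hm0]
  apply mul_le_mul_of_nonneg_left _ (inv_nonneg.mpr hb0.le)
  have hbm : 0 < b*m' := mul_pos hb0 hm0
  have hsplit : Th t k (b*m')
      = (∫ w in (b*m')..b, Real.exp (-(t*w)) * (Real.log (w/(b*m')))^k)
        + ∫ w in b..1, Real.exp (-(t*w)) * (Real.log (w/(b*m')))^k :=
    (intervalIntegral.integral_add_adjacent_intervals
      (integrand_intble t k hbm hbm hb0) (integrand_intble t k hbm hb0 one_pos)).symm
  rw [hsplit]
  have hpos : 0 ≤ ∫ w in b..1, Real.exp (-(t*w)) * (Real.log (w/(b*m')))^k := by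
    apply intervalIntegral.integral_nonneg hb1
    intro w hw
    have h1 : 1 ≤ w/(b*m') := by
      rw [le_div_iff₀ hbm]
      nlinarith [hw.1]
    exact mul_nonneg (Real.exp_pos _).le (pow_nonneg (Real.log_nonneg h1) k)
  linarith

lemma step (t : ℝ) (k : ℕ) {m' b : ℝ} (hm0 : 0 < m') (hm1 : m' ≤ 1)
    (hb0 : 0 < b) (hb1 : b ≤ 1) :
    (∫ x in b..(1:ℝ), Psi t m' k x) ≤ Th t (k+1) (b*m') := by
  set D : ℝ → ℝ := fun x => Th t (k+1) (x*m') - ∫ z in x..(1:ℝ), Psi t m' k z with hD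
  have hPsiCont : ContinuousOn (Psi t m' k) (Set.Ioi 0) :=
    fun z hz => (Psi_contAt t m' k hz hm0).continuousWithinAt
  have hderiv : ∀ x : ℝ, 0 < x →
      HasDerivAt D (-((k+1:ℝ)/(x*m')) * Th t k (x*m') * m' + Psi t m' k x) x := by
    intro x hx
    have h1 : HasDerivAt (fun x : ℝ => Th t (k+1) (x*m'))
        (-((k+1:ℝ)/(x*m')) * Th t k (x*m') * m') x := by
      have h := (Th_hasDeriv t k (mul_pos hx hm0)).comp x ((hasDerivAt_id x).mul_const m')
      simp only [one_mul] at h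
      exact h
    have hInt : IntervalIntegrable (Psi t m' k) volume x 1 := by
      apply ContinuousOn.intervalIntegrable
      apply hPsiCont.mono
      intro w hw
      exact lt_of_lt_of_le (lt_inf_iff.mpr ⟨hx, one_pos⟩) hw.1
    have h2 : HasDerivAt (fun x : ℝ => ∫ z in x..(1:ℝ), Psi t m' k z)
        (-(Psi t m' k x)) x :=
      intervalIntegral.integral_hasDerivAt_left hInt
        (hPsiCont.stronglyMeasurableAtFilter isOpen_Ioi _ hx)
        (Psi_contAt t m' k hx hm0)
    have := h1.sub h2
    simp only [sub_neg_eq_add] at this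
    exact this
  have hcont : ContinuousOn D (Set.Icc b 1) := by
    intro x hx
    exact ((hderiv x (lt_of_lt_of_le hb0 hx.1)).continuousAt).continuousWithinAt
  have hanti : AntitoneOn D (Set.Icc b 1) := by
    apply antitoneOn_of_deriv_nonpos (convex_Icc b 1) hcont
    · intro x hx
      rw [interior_Icc] at hx
      exact ((hderiv x (lt_of_lt_of_le hb0 hx.1.le)).differentiableAt).differentiableWithinAt
    · intro x hx
      rw [interior_Icc] at hx
      have hx0 : 0 < x := lt_of_lt_of_le hb0 hx.1.le
      have hx1 : x ≤ 1 := hx.2.le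
      rw [(hderiv x hx0).deriv]
      have hbnd := Psi_le t m' k hx0 hx1 hm0 hm1
      have hThnn : 0 ≤ Th t k (x*m') :=
        Th_nonneg t k (mul_pos hx0 hm0) (by nlinarith)
      have hsimp : -((k+1:ℝ)/(x*m')) * Th t k (x*m') * m' = -((k+1:ℝ)/x) * Th t k (x*m') := by
        field_simp
      rw [hsimp]
      have : Psi t m' k x ≤ x⁻¹ * Th t k (x*m') := hbnd
      have hxk : x⁻¹ * Th t k (x*m') ≤ ((k+1:ℝ)/x) * Th t k (x*m') := by
        apply mul_le_mul_of_nonneg_right _ hThnn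
        rw [div_eq_mul_inv]
        nlinarith [inv_nonneg.mpr hx0.le, Nat.cast_nonneg (α := ℝ) k]
      linarith
  have hmem1 : (1:ℝ) ∈ Set.Icc b 1 := ⟨hb1, le_rfl⟩
  have hmemb : b ∈ Set.Icc b 1 := ⟨le_rfl, hb1⟩
  have hD1 : D 1 = Th t (k+1) m' := by
    simp [hD, intervalIntegral.integral_same]
  have h0 : 0 ≤ D 1 := by
    rw [hD1]; exact Th_nonneg t (k+1) hm0 hm1
  have hle := hanti hmemb hmem1 hb1
  simp only [hD, one_mul, intervalIntegral.integral_same, sub_zero] at hle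
  simp only [hD, one_mul, intervalIntegral.integral_same, sub_zero] at hD1 h0
  linarith
lemma claimA : ∀ (d : ℕ) (y : Fin (d+1) → ℝ), (∀ j, 0 < y j) → (∀ j, y j ≤ 1) →
    ∀ t : ℝ, 0 < t →
    (∫ x in Set.Icc y 1, Real.exp (-(t * ∏ j, x j))) ≤ Th t d (∏ j, y j) := by
  intro d
  induction d with
  | zero =>
    intro y hy0 hy1 t ht
    have h01 : y 0 ≤ 1 := hy1 0
    have heq : (∫ x in Set.Icc y 1, Real.exp (-(t * ∏ j, x j)))
        = ∫ r in Set.Icc (y 0) 1, Real.exp (-(t * r)) := by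
      have hpre : (⇑(MeasurableEquiv.funUnique (Fin 1) ℝ)) ⁻¹' (Set.Icc (y 0) 1)
          = Set.Icc y 1 := by
        ext x
        simp only [Set.mem_preimage, MeasurableEquiv.funUnique_apply, Set.mem_Icc]
        constructor
        · rintro ⟨h1, h2⟩
          exact ⟨fun j => by rw [Fin.eq_zero j]; exact h1, fun j => by rw [Fin.eq_zero j]; exact h2⟩
        · rintro ⟨h1, h2⟩
          exact ⟨h1 0, h2 0⟩
      rw [← hpre]
      have := (volume_preserving_funUnique (Fin 1) ℝ).setIntegral_preimage_emb
        (MeasurableEquiv.measurableEmbedding _) (fun r => Real.exp (-(t * r))) (Set.Icc (y 0) 1)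
      rw [← this]
      apply setIntegral_congr_fun (by measurability)
      intro x _
      simp [Fin.prod_univ_one, MeasurableEquiv.funUnique_apply]
    rw [heq]
    unfold Th
    rw [Fin.prod_univ_one]
    rw [MeasureTheory.integral_Icc_eq_integral_Ioc, ← intervalIntegral.integral_of_le h01]
    apply le_of_eq
    apply intervalIntegral.integral_congr
    intro w hw
    simp [pow_zero]
  | succ d ih =>
    intro y hy0 hy1 t ht
    set y' : Fin (d+1) → ℝ := fun j => y j.succ with hy'
    have hy'0 : ∀ j, 0 < y' j := fun j => hy0 j.succ
    have hy'1 : ∀ j, y' j ≤ 1 := fun j => hy1 j.succ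
    set m' : ℝ := ∏ j, y' j with hm'
    have hm'0 : 0 < m' := Finset.prod_pos (fun j _ => hy'0 j)
    have hm'1 : m' ≤ 1 := Finset.prod_le_one (fun j _ => (hy'0 j).le) (fun j _ => hy'1 j)
    have hb0 : 0 < y 0 := hy0 0
    have hb1 : y 0 ≤ 1 := hy1 0
    set S : Set (ℝ × (Fin (d+1) → ℝ)) := (Set.Icc (y 0) 1) ×ˢ (Set.Icc y' 1) with hS
    set G : ℝ × (Fin (d+1) → ℝ) → ℝ := fun p => Real.exp (-(t * (p.1 * ∏ j, p.2 j))) with hG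
    have hGcont : Continuous G := by
      apply Real.continuous_exp.comp
      apply Continuous.neg
      apply continuous_const.mul
      exact continuous_fst.mul (continuous_finset_prod _ (fun j _ => (continuous_apply j).comp continuous_snd))
    have heq : (∫ x in Set.Icc y 1, Real.exp (-(t * ∏ j, x j))) = ∫ p in S, G p := by
      have hpre : (⇑(MeasurableEquiv.piFinSuccAbove (fun _ : Fin (d+2) => ℝ) 0)) ⁻¹' S
          = Set.Icc y 1 := by
        ext x
        simp only [hS, Set.mem_preimage, MeasurableEquiv.piFinSuccAbove_apply, Set.mem_prod,
          Set.mem_Icc, Fin.zero_succAbove]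
        constructor
        · rintro ⟨⟨h1, h2⟩, ⟨h3, h4⟩⟩
          constructor
          · intro j
            refine Fin.cases h1 (fun i => h3 i) j
          · intro j
            refine Fin.cases h2 (fun i => h4 i) j
        · rintro ⟨h1, h2⟩
          exact ⟨⟨h1 0, h2 0⟩, ⟨fun i => h1 i.succ, fun i => h2 i.succ⟩⟩
      rw [← hpre]
      have := (volume_preserving_piFinSuccAbove (fun _ : Fin (d+2) => ℝ) 0).setIntegral_preimage_emb
        (MeasurableEquiv.measurableEmbedding _) G S
      rw [← this]
      apply setIntegral_congr_fun (by measurability)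
      intro x _
      simp only [hG, MeasurableEquiv.piFinSuccAbove_apply, Fin.insertNthEquiv,
        Equiv.coe_fn_symm_mk, Fin.removeNth, Fin.zero_succAbove]
      rw [Fin.prod_univ_succ]
    rw [heq]
    have hGint : IntegrableOn G S := by
      apply hGcont.continuousOn.integrableOn_compact
      exact IsCompact.prod isCompact_Icc isCompact_Icc
    have hiter : (∫ p in S, G p) = ∫ x0 in Set.Icc (y 0) 1, ∫ z in Set.Icc y' 1, G (x0, z) := by
      rw [hS, Measure.volume_eq_prod] at hGint ⊢
      exact MeasureTheory.setIntegral_prod G hGint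
    rw [hiter]
    have hPsiInt : IntegrableOn (Psi t m' (d)) (Set.Icc (y 0) 1) := by
      apply ContinuousOn.integrableOn_compact isCompact_Icc
      intro x hx
      exact (Psi_contAt t m' d (lt_of_lt_of_le hb0 hx.1) hm'0).continuousWithinAt
    have hinner : ∀ x0 ∈ Set.Icc (y 0) 1, (∫ z in Set.Icc y' 1, G (x0, z)) ≤ Psi t m' d x0 := by
      intro x0 hx0
      have hx0p : 0 < x0 := lt_of_lt_of_le hb0 hx0.1
      have : (∫ z in Set.Icc y' 1, G (x0, z))
          = ∫ z in Set.Icc y' 1, Real.exp (-((t*x0) * ∏ j, z j)) := by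
        apply setIntegral_congr_fun (by measurability)
        intro z _
        simp only [hG]
        ring_nf
      rw [this]
      exact ih y' hy'0 hy'1 (t*x0) (mul_pos ht hx0p)
    have hmarg : IntegrableOn (fun x0 => ∫ z in Set.Icc y' 1, G (x0, z)) (Set.Icc (y 0) 1) := by
      have h1 : Integrable G (((volume : Measure ℝ).restrict (Set.Icc (y 0) 1)).prod
          ((volume : Measure (Fin (d+1) → ℝ)).restrict (Set.Icc y' 1))) := by
        rw [Measure.prod_restrict]
        rw [hS, Measure.volume_eq_prod] at hGint
        exact hGint
      exact h1.integral_prod_left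
    have hmono := setIntegral_mono_on hmarg hPsiInt measurableSet_Icc hinner
    apply le_trans hmono
    have : (∫ x0 in Set.Icc (y 0) 1, Psi t m' d x0) = ∫ x0 in (y 0)..1, Psi t m' d x0 := by
      rw [MeasureTheory.integral_Icc_eq_integral_Ioc, ← intervalIntegral.integral_of_le hb1]
    rw [this]
    have hstep := step t d hm'0 hm'1 hb0 hb1
    apply le_trans hstep
    apply le_of_eq
    congr 1
    rw [Fin.prod_univ_succ]
noncomputable def Kc (k : ℕ) : ℝ := ∫ w in Set.Ioi (0:ℝ), Real.exp (-(w/2)) * |Real.log w|^k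

lemma log_abs_le_low {k : ℕ} {w : ℝ} (h0 : 0 < w) (h1 : w ≤ 1) :
    |Real.log w|^k ≤ ((k:ℝ)+1)^k * w ^ (-((k:ℝ)/((k:ℝ)+1))) := by
  set c : ℝ := (k:ℝ)+1 with hc
  have hcpos : 0 < c := by positivity
  have habs : |Real.log w| = -Real.log w := abs_of_nonpos (Real.log_nonpos h0.le h1)
  have hkey : -Real.log w ≤ c * w ^ (-(1/c)) := by
    have h2 : Real.log (w ^ (-(1/c))) = (-(1/c)) * Real.log w := Real.log_rpow h0 _
    have h3 : Real.log (w ^ (-(1/c))) ≤ w ^ (-(1/c)) := by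
      have hp : (0:ℝ) < w ^ (-(1/c)) := Real.rpow_pos_of_pos h0 _
      linarith [Real.log_le_sub_one_of_pos hp]
    calc -Real.log w = c * ((-(1/c)) * Real.log w) := by field_simp
      _ = c * Real.log (w ^ (-(1/c))) := by rw [h2]
      _ ≤ c * w ^ (-(1/c)) := by
          apply mul_le_mul_of_nonneg_left _ hcpos.le
          exact (Real.log_le_sub_one_of_pos (Real.rpow_pos_of_pos h0 _)).trans (by linarith)
  have hnn : 0 ≤ -Real.log w := by
    rw [← habs]; exact abs_nonneg _
  calc |Real.log w|^k = (-Real.log w)^k := by rw [habs]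
    _ ≤ (c * w ^ (-(1/c)))^k := pow_le_pow_left₀ hnn hkey k
    _ = c^k * (w ^ (-(1/c)))^k := mul_pow _ _ _
    _ = c^k * w ^ (-((k:ℝ)/c)) := by
        rw [← Real.rpow_natCast (w ^ (-(1/c))) k, ← Real.rpow_mul h0.le]
        congr 1
        field_simp

lemma Kint (k : ℕ) :
    IntegrableOn (fun w => Real.exp (-(w/2)) * |Real.log w|^k) (Set.Ioi (0:ℝ)) := by
  have hmeas : Measurable (fun w : ℝ => Real.exp (-(w/2)) * |Real.log w|^k) :=
    (Real.measurable_exp.comp ((measurable_id.div_const 2).neg)).mul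
      ((Real.measurable_log.abs).pow_const k)
  rw [← Set.Ioc_union_Ioi_eq_Ioi (le_of_lt one_pos)]
  apply IntegrableOn.union
  · -- on (0,1]
    set r : ℝ := -((k:ℝ)/((k:ℝ)+1)) with hr
    have hrgt : (-1:ℝ) < r := by
      rw [hr, neg_lt, neg_neg]
      rw [div_lt_one (by positivity)]
      linarith
    have hint : IntegrableOn (fun w : ℝ => ((k:ℝ)+1)^k * w ^ r) (Set.Ioc (0:ℝ) 1) :=
      (((intervalIntegral.intervalIntegrable_rpow' hrgt (a := 0) (b := 1)).1)).const_mul _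
    apply Integrable.mono' hint hmeas.aestronglyMeasurable.restrict
    filter_upwards [ae_restrict_mem measurableSet_Ioc] with w hw
    rw [Real.norm_eq_abs, abs_mul, abs_of_nonneg (Real.exp_pos _).le,
      abs_of_nonneg (pow_nonneg (abs_nonneg _) k)]
    calc Real.exp (-(w/2)) * |Real.log w|^k ≤ 1 * |Real.log w|^k := by
          apply mul_le_mul_of_nonneg_right _ (pow_nonneg (abs_nonneg _) k)
          exact Real.exp_le_one_iff.mpr (by linarith [hw.1])
      _ = |Real.log w|^k := one_mul _
      _ ≤ ((k:ℝ)+1)^k * w ^ r := log_abs_le_low hw.1 hw.2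
  · -- on (1,∞)
    set c : ℝ := (k:ℝ)+1 with hc
    have hcpos : (0:ℝ) < c := by positivity
    have hint : IntegrableOn (fun w : ℝ => (4*c^k) * Real.exp ((-(1/4))*w)) (Set.Ioi (1:ℝ)) :=
      (exp_neg_integrableOn_Ioi 1 (by norm_num : (0:ℝ) < 1/4)).const_mul _
    apply Integrable.mono' hint hmeas.aestronglyMeasurable.restrict
    filter_upwards [ae_restrict_mem measurableSet_Ioi] with w hw
    have hw1 : (1:ℝ) ≤ w := le_of_lt hw
    have hw0 : (0:ℝ) < w := lt_of_lt_of_le one_pos hw1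
    rw [Real.norm_eq_abs, abs_mul, abs_of_nonneg (Real.exp_pos _).le,
      abs_of_nonneg (pow_nonneg (abs_nonneg _) k)]
    have hlog : |Real.log w|^k ≤ c^k * w := by
      have h1 : |Real.log w| = Real.log w := abs_of_nonneg (Real.log_nonneg hw1)
      have h2 : Real.log w ≤ c * w ^ (1/c) := by
        have ha : Real.log (w ^ (1/c)) = (1/c) * Real.log w := Real.log_rpow hw0 _
        have hb : Real.log (w ^ (1/c)) ≤ w ^ (1/c) := by
          linarith [Real.log_le_sub_one_of_pos (Real.rpow_pos_of_pos hw0 (1/c))]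
        calc Real.log w = c * ((1/c) * Real.log w) := by field_simp
          _ = c * Real.log (w ^ (1/c)) := by rw [ha]
          _ ≤ c * w ^ (1/c) := mul_le_mul_of_nonneg_left hb hcpos.le
      calc |Real.log w|^k = (Real.log w)^k := by rw [h1]
        _ ≤ (c * w ^ (1/c))^k := by
            apply pow_le_pow_left₀ (Real.log_nonneg hw1) h2
        _ = c^k * (w ^ ((1:ℝ)/c))^k := mul_pow _ _ _
        _ = c^k * w ^ ((k:ℝ)/c) := by
            rw [← Real.rpow_natCast (w ^ ((1:ℝ)/c)) k, ← Real.rpow_mul hw0.le]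
            congr 1
            field_simp
        _ ≤ c^k * w ^ ((1:ℝ)) := by
            apply mul_le_mul_of_nonneg_left _ (by positivity)
            apply Real.rpow_le_rpow_of_exponent_le hw1
            rw [div_le_one hcpos]
            linarith
        _ = c^k * w := by rw [Real.rpow_one]
    have hwexp : w * Real.exp (-(w/2)) ≤ 4 * Real.exp ((-(1/4))*w) := by
      have h1 : w/4 + 1 ≤ Real.exp (w/4) := Real.add_one_le_exp _
      have h2 : w ≤ 4 * Real.exp (w/4) := by nlinarith [Real.exp_pos (w/4)]
      calc w * Real.exp (-(w/2)) ≤ (4 * Real.exp (w/4)) * Real.exp (-(w/2)) :=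
            mul_le_mul_of_nonneg_right h2 (Real.exp_pos _).le
        _ = 4 * Real.exp ((-(1/4))*w) := by
            rw [mul_assoc, ← Real.exp_add]
            congr 1
            ring
    calc Real.exp (-(w/2)) * |Real.log w|^k ≤ Real.exp (-(w/2)) * (c^k * w) :=
          mul_le_mul_of_nonneg_left hlog (Real.exp_pos _).le
      _ = c^k * (w * Real.exp (-(w/2))) := by ring
      _ ≤ c^k * (4 * Real.exp ((-(1/4))*w)) :=
          mul_le_mul_of_nonneg_left hwexp (by positivity)
      _ = (4*c^k) * Real.exp ((-(1/4))*w) := by ring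

lemma Kc_nonneg (k : ℕ) : 0 ≤ Kc k := by
  apply setIntegral_nonneg measurableSet_Ioi
  intro w _
  positivity

lemma Th_bound (k : ℕ) {t m : ℝ} (ht : 0 < t) (hm0 : 0 < m) (hm1 : m ≤ 1) :
    Th t k m ≤ Real.exp (-(t*m/2)) * (2^k * Kc k + 2^(k+1) * |Real.log (t*m)|^k) / t := by
  set C0 : ℝ := Real.exp (-(t*m/2)) with hC0
  set B : ℝ := |Real.log (t*m)| with hB
  have hBnn : 0 ≤ B := abs_nonneg _
  -- continuity/integrability of auxiliary integrands
  have hg1cont : ContinuousOn (fun v : ℝ => Real.exp (-(t*v/2)) * |Real.log (t*v)|^k)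
      (Set.uIcc m 1) := by
    apply ContinuousOn.mul
    · exact (Real.continuous_exp.comp
        (((continuous_const.mul continuous_id).div_const 2).neg)).continuousOn
    · apply ContinuousOn.pow
      apply ContinuousOn.abs
      apply Real.continuousOn_log.comp (continuous_const.mul continuous_id).continuousOn
      intro v hv
      exact Set.mem_compl_singleton_iff.mpr (mul_pos ht (mem_uIcc_pos hm0 one_pos hv)).ne'
  have hg1int : IntervalIntegrable (fun v : ℝ => Real.exp (-(t*v/2)) * |Real.log (t*v)|^k)
      volume m 1 := hg1cont.intervalIntegrable
  have hg2int : IntervalIntegrable (fun v : ℝ => Real.exp (-(t*v/2))) volume m 1 :=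
    (Real.continuous_exp.comp
      (((continuous_const.mul continuous_id).div_const 2).neg)).intervalIntegrable m 1
  -- first integral bound
  have hI1 : (∫ v in m..(1:ℝ), Real.exp (-(t*v/2)) * |Real.log (t*v)|^k) ≤ t⁻¹ * Kc k := by
    have h := intervalIntegral.integral_comp_mul_left (a := m) (b := 1)
      (fun w => Real.exp (-(w/2)) * |Real.log w|^k) ht.ne'
    rw [h, smul_eq_mul]
    apply mul_le_mul_of_nonneg_left _ (inv_nonneg.mpr ht.le)
    rw [mul_one, intervalIntegral.integral_of_le (by nlinarith : t*m ≤ t)]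
    apply setIntegral_mono_set (Kint k)
    · exact Filter.Eventually.of_forall (fun w => by positivity)
    · apply HasSubset.Subset.eventuallyLE
      intro w hw
      exact lt_trans (mul_pos ht hm0) hw.1
  have hI1nn : (0:ℝ) ≤ ∫ v in m..(1:ℝ), Real.exp (-(t*v/2)) * |Real.log (t*v)|^k := by
    apply intervalIntegral.integral_nonneg hm1
    intro v _
    positivity
  -- second integral bound
  have hI2 : (∫ v in m..(1:ℝ), Real.exp (-(t*v/2))) ≤ 2/t := by
    have hderiv : ∀ v ∈ Set.uIcc m (1:ℝ),
        HasDerivAt (fun v => (-2/t) * Real.exp (-(t*v/2))) (Real.exp (-(t*v/2))) v := by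
      intro v _
      have h1 : HasDerivAt (fun v : ℝ => -(t*v/2)) (-(t/2)) v := by
        have h := (((hasDerivAt_id v).const_mul t).div_const 2).neg
        simp only [mul_one] at h
        exact h
      have h2 := (Real.hasDerivAt_exp (-(t*v/2))).comp v h1
      have h3 := h2.const_mul (-2/t)
      refine h3.congr_deriv ?_
      field_simp
    have heq := intervalIntegral.integral_eq_sub_of_hasDerivAt hderiv hg2int
    rw [heq]
    have e1 : Real.exp (-(t*m/2)) ≤ 1 := Real.exp_le_one_iff.mpr (by nlinarith)
    have e2 : (0:ℝ) < Real.exp (-(t*1/2)) := Real.exp_pos _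
    have h4 : -2/t * Real.exp (-(t*1/2)) - -2/t * Real.exp (-(t*m/2))
        = (2/t) * (Real.exp (-(t*m/2)) - Real.exp (-(t*1/2))) := by ring
    rw [h4]
    calc (2/t) * (Real.exp (-(t*m/2)) - Real.exp (-(t*1/2))) ≤ (2/t) * 1 :=
          mul_le_mul_of_nonneg_left (by linarith) (by positivity)
      _ = 2/t := mul_one _
  -- pointwise bound
  have hpt : ∀ v ∈ Set.Icc m (1:ℝ), Real.exp (-(t*v)) * (Real.log (v/m))^k
      ≤ C0 * ((2:ℝ)^k * (Real.exp (-(t*v/2)) * |Real.log (t*v)|^k)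
          + ((2:ℝ)^k * B^k) * Real.exp (-(t*v/2))) := by
    intro v hv
    have hv0 : 0 < v := lt_of_lt_of_le hm0 hv.1
    set A : ℝ := |Real.log (t*v)| with hA
    have hAnn : 0 ≤ A := abs_nonneg _
    have hexp : Real.exp (-(t*v)) = Real.exp (-(t*v/2)) * Real.exp (-(t*v/2)) := by
      rw [← Real.exp_add]; ring_nf
    have hexple : Real.exp (-(t*v/2)) ≤ C0 := by
      rw [hC0]; apply Real.exp_le_exp.mpr; nlinarith [hv.1]
    have hlognn : 0 ≤ Real.log (v/m) := Real.log_nonneg ((one_le_div hm0).mpr hv.1)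
    have habs : Real.log (v/m) ≤ A + B := by
      have hlogid : Real.log (v/m) = Real.log (t*v) - Real.log (t*m) := by
        rw [Real.log_div hv0.ne' hm0.ne', Real.log_mul ht.ne' hv0.ne',
          Real.log_mul ht.ne' hm0.ne']
        ring
      rw [hlogid, sub_eq_add_neg]
      calc Real.log (t*v) + -Real.log (t*m) ≤ |Real.log (t*v)| + |(-Real.log (t*m))| :=
            add_le_add (le_abs_self _) (le_abs_self _)
        _ = A + B := by rw [abs_neg]
    have hpow : (Real.log (v/m))^k ≤ 2^k * (A^k + B^k) := by
      calc (Real.log (v/m))^k ≤ (A+B)^k := pow_le_pow_left₀ hlognn habs k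
        _ ≤ (2*max A B)^k := by
            apply pow_le_pow_left₀ (by positivity)
            calc A + B ≤ max A B + max A B := add_le_add (le_max_left _ _) (le_max_right _ _)
              _ = 2 * max A B := by ring
        _ = 2^k * (max A B)^k := mul_pow _ _ _
        _ ≤ 2^k * (A^k + B^k) := by
            apply mul_le_mul_of_nonneg_left _ (by positivity)
            rcases le_total A B with h | h
            · rw [max_eq_right h]
              exact le_add_of_nonneg_left (pow_nonneg hAnn k)
            · rw [max_eq_left h]
              exact le_add_of_nonneg_right (pow_nonneg hBnn k)
    calc Real.exp (-(t*v)) * (Real.log (v/m))^k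
        ≤ (C0 * Real.exp (-(t*v/2))) * (2^k * (A^k + B^k)) := by
          rw [hexp]
          apply mul_le_mul
          · exact mul_le_mul_of_nonneg_right hexple (Real.exp_pos _).le
          · exact hpow
          · exact pow_nonneg hlognn k
          · positivity
      _ = C0 * ((2:ℝ)^k * (Real.exp (-(t*v/2)) * A^k)
          + ((2:ℝ)^k * B^k) * Real.exp (-(t*v/2))) := by ring
  -- combine
  have hmono : Th t k m ≤ ∫ v in m..(1:ℝ),
      C0 * ((2:ℝ)^k * (Real.exp (-(t*v/2)) * |Real.log (t*v)|^k)
          + ((2:ℝ)^k * B^k) * Real.exp (-(t*v/2))) := by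
    apply intervalIntegral.integral_mono_on hm1 (integrand_intble t k hm0 hm0 one_pos) _ hpt
    exact ((hg1int.const_mul _).add (hg2int.const_mul _)).const_mul _
  rw [intervalIntegral.integral_const_mul, intervalIntegral.integral_add
    (hg1int.const_mul _) (hg2int.const_mul _), intervalIntegral.integral_const_mul,
    intervalIntegral.integral_const_mul] at hmono
  apply le_trans hmono
  have hC0nn : 0 ≤ C0 := (Real.exp_pos _).le
  rw [mul_div_assoc]
  apply mul_le_mul_of_nonneg_left _ hC0nn
  have step1 : (2:ℝ)^k * (∫ v in m..(1:ℝ), Real.exp (-(t*v/2)) * |Real.log (t*v)|^k)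
      ≤ (2:ℝ)^k * (t⁻¹ * Kc k) := mul_le_mul_of_nonneg_left hI1 (by positivity)
  have step2 : ((2:ℝ)^k * B^k) * (∫ v in m..(1:ℝ), Real.exp (-(t*v/2)))
      ≤ ((2:ℝ)^k * B^k) * (2/t) := mul_le_mul_of_nonneg_left hI2 (by positivity)
  have : (2:ℝ)^k * (t⁻¹ * Kc k) + ((2:ℝ)^k * B^k) * (2/t)
      = (2^k * Kc k + 2^(k+1) * B^k) / t := by
    field_simp
    ring
  linarith
/-- There is `D > 0` depending only on `d` such that for all `α > 0`, `s > 0` and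
`y ∈ [0,1]^d` with `|y| > 0`:
`c_{α,s}(y) ≤ (D/α) e^{-α s |y|/2} (1 + |log(α s |y|)|^{d-1})`. -/
theorem stmt4 (d : ℕ) (hd : 1 ≤ d) :
    ∃ D : ℝ, 0 < D ∧ ∀ α s : ℝ, 0 < α → 0 < s → ∀ y ∈ cube d, 0 < pvol y →
      cAS α s y ≤
        (D / α) * Real.exp (-(α * s * pvol y / 2)) *
          (1 + |Real.log (α * s * pvol y)| ^ (d - 1)) := by
  obtain ⟨k, rfl⟩ : ∃ k, d = k + 1 := ⟨d - 1, (Nat.succ_pred_eq_of_pos hd).symm⟩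
  simp only [Nat.add_sub_cancel]
  refine ⟨2^k * Kc k + 2^(k+1) + 1, ?_, ?_⟩
  · have h := Kc_nonneg k
    have h2 : (0:ℝ) < 2^k := by positivity
    have h3 : (0:ℝ) < 2^(k+1) := by positivity
    nlinarith
  intro α s hα hs y hy hpv
  have ht : 0 < α * s := mul_pos hα hs
  rw [cube, Set.mem_Icc] at hy
  have hy1 : ∀ j, y j ≤ 1 := fun j => hy.2 j
  have hy0' : ∀ j, 0 ≤ y j := fun j => hy.1 j
  have hpv' : 0 < ∏ j, y j := hpv
  have hy0 : ∀ j, 0 < y j := by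
    intro j
    rcases (hy0' j).lt_or_eq with h | h
    · exact h
    · exfalso
      have : (∏ j, y j) = 0 := Finset.prod_eq_zero (Finset.mem_univ j) h.symm
      rw [this] at hpv'
      exact lt_irrefl 0 hpv'
  have hm1 : (∏ j, y j) ≤ 1 :=
    Finset.prod_le_one (fun j _ => (hy0 j).le) (fun j _ => hy1 j)
  have hIci : MeasurableSet {x : Fin (k+1) → ℝ | y ≤ x} := by
    have hset : {x : Fin (k+1) → ℝ | y ≤ x} = ⋂ j, (fun x : Fin (k+1) → ℝ => x j) ⁻¹' (Set.Ici (y j)) := by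
      ext x
      simp [Pi.le_def, Set.mem_iInter]
    rw [hset]
    exact MeasurableSet.iInter (fun j => (measurable_pi_apply j) measurableSet_Ici)
  have hset : Set.Icc (0 : Fin (k+1) → ℝ) 1 ∩ {x : Fin (k+1) → ℝ | y ≤ x} = Set.Icc y 1 := by
    ext x
    simp only [Set.mem_inter_iff, Set.mem_Icc, Set.mem_setOf_eq]
    constructor
    · rintro ⟨⟨_, h1⟩, h2⟩
      exact ⟨h2, h1⟩
    · rintro ⟨h1, h2⟩
      exact ⟨⟨le_trans hy.1 h1, h2⟩, h1⟩
  have hcal : cAS α s y = s * ∫ x in Set.Icc y 1, Real.exp (-((α*s) * ∏ j, x j)) := by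
    unfold cAS
    congr 1
    rw [show cube (k+1) = Set.Icc (0 : Fin (k+1) → ℝ) 1 from rfl,
      MeasureTheory.setIntegral_indicator hIci, hset]
    apply setIntegral_congr_fun measurableSet_Icc
    intro x _
    rfl
  rw [hcal]
  simp only [pvol]
  set t : ℝ := α * s with htdef
  set m : ℝ := ∏ j, y j with hmdef
  set B : ℝ := |Real.log (t * m)| with hBdef
  set C0 : ℝ := Real.exp (-(t * m / 2)) with hC0def
  set X : ℝ := 2^k * Kc k + 2^(k+1) * B^k with hXdef
  set D : ℝ := 2^k * Kc k + 2^(k+1) + 1 with hDdef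
  have hstep1 : s * (∫ x in Set.Icc y 1, Real.exp (-(t * ∏ j, x j))) ≤ s * Th t k m :=
    mul_le_mul_of_nonneg_left (claimA k y hy0 hy1 t ht) hs.le
  have hstep2 : s * Th t k m ≤ s * (C0 * X / t) :=
    mul_le_mul_of_nonneg_left (Th_bound k ht hpv' hm1) hs.le
  have heq3 : s * (C0 * X / t) = C0 * X / α := by
    rw [htdef]
    field_simp
  have hC0nn : 0 ≤ C0 := (Real.exp_pos _).le
  have hBk : 0 ≤ B^k := pow_nonneg (abs_nonneg _) k
  have hXD : X ≤ D * (1 + B^k) := by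
    have h1 : (0:ℝ) ≤ 2^k * Kc k := mul_nonneg (by positivity) (Kc_nonneg k)
    have h2 : (0:ℝ) < 2^(k+1) := by positivity
    nlinarith
  have hfinal : C0 * X / α ≤ D / α * C0 * (1 + B^k) := by
    have hrw : D / α * C0 * (1 + B^k) = C0 * (D * (1 + B^k)) / α := by ring
    rw [hrw]
    gcongr
  linarith
end

section
/- For every integer d ≥ 2, every s > 0 and every y ∈ [0,1]^d with |y| > 0: c_{1,s}(y) ≤ ∫_{s|y|}^{s} ( log w − log(s|y|) )^{d−1} e^{−w} dw. -/
open MeasureTheory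

set_option maxHeartbeats 1000000 in
lemma key : ∀ (d : ℕ) (s : ℝ), 0 < s → ∀ y : Fin (d+1) → ℝ, (∀ j, 0 < y j) → (∀ j, y j ≤ 1) →
    (∫ x in Set.Icc y 1, Real.exp (-(s * ∏ j, x j))) ≤
      ∫ u in (∏ j, y j)..1, (Real.log u - Real.log (∏ j, y j))^d * Real.exp (-(s*u)) := by
  intro d
  induction d with
  | zero =>
    intro s hs y hy hy1
    have hmp := volume_preserving_funUnique (Fin 1) ℝ
    have hpre : (MeasurableEquiv.funUnique (Fin 1) ℝ) ⁻¹' (Set.Icc (y 0) 1) = Set.Icc y 1 := by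
      ext x
      simp [MeasurableEquiv.funUnique, Set.mem_Icc, Pi.le_def, Fin.forall_fin_one,
        Equiv.funUnique]
    have hfun : ∀ x : Fin 1 → ℝ, Real.exp (-(s * ∏ j, x j)) =
        (fun t => Real.exp (-(s*t))) ((MeasurableEquiv.funUnique (Fin 1) ℝ) x) := by
      intro x; simp [Fin.prod_univ_one, MeasurableEquiv.funUnique]
    simp_rw [hfun]
    rw [← hpre]
    refine (hmp.setIntegral_preimage_emb (MeasurableEquiv.measurableEmbedding _)
        (fun t => Real.exp (-(s * t))) (Set.Icc (y 0) 1)).trans_le ?_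
    simp only [Fin.prod_univ_one, pow_zero, one_mul]
    rw [integral_Icc_eq_integral_Ioc, ← intervalIntegral.integral_of_le (hy1 0)]
    simp [Fin.prod_univ_succ]
  | succ d ih =>
    intro s hs y hy hy1
    set y' : Fin (d+1) → ℝ := y ∘ Fin.succ with hy'def
    have hy'pos : ∀ j, 0 < y' j := fun j => hy _
    have hy'le : ∀ j, y' j ≤ 1 := fun j => hy1 _
    set P' : ℝ := ∏ j, y' j with hP'def
    set P : ℝ := ∏ j, y j with hPdef
    have hy0 : 0 < y 0 := hy 0
    have hy01 : y 0 ≤ 1 := hy1 0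
    have hP' : 0 < P' := Finset.prod_pos fun j _ => hy'pos j
    have hP'1 : P' ≤ 1 := Finset.prod_le_one (fun j _ => (hy'pos j).le) (fun j _ => hy'le j)
    have hPP : P = y 0 * P' := by
      rw [hPdef, Fin.prod_univ_succ]; rfl
    have hP : 0 < P := by rw [hPP]; positivity
    have hP1 : P ≤ 1 := by
      rw [hPP]; exact mul_le_one₀ hy01 hP'.le hP'1
    -- the majorant function
    set g : ℝ → ℝ := fun w => (Real.log (max w P) - Real.log P)^d * Real.exp (-(s*w)) with hgdef
    have hgcont : Continuous g := by
      apply Continuous.mul ?_ (by fun_prop)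
      apply Continuous.pow
      apply Continuous.sub ?_ continuous_const
      apply Real.continuousOn_log.comp_continuous (continuous_id.max continuous_const)
      intro x
      simp only [Set.mem_compl_iff, Set.mem_singleton_iff]
      exact ne_of_gt (lt_of_lt_of_le hP (le_max_right _ _))
    have hgnonneg : ∀ w, 0 ≤ g w := by
      intro w
      apply mul_nonneg (pow_nonneg ?_ _) (Real.exp_nonneg _)
      have := Real.log_le_log hP (le_max_right w P)
      linarith
    have hgint : ∀ a b : ℝ, IntervalIntegrable g volume a b :=
      fun a b => hgcont.intervalIntegrable a b
    -- the bound function of a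
    set bound : ℝ → ℝ := fun a => a⁻¹ * ∫ w in (a*P')..a, g w with hbdef
    -- split the integral
    have hsplit : (∫ x in Set.Icc y 1, Real.exp (-(s * ∏ j, x j))) =
        ∫ a in Set.Icc (y 0) 1, ∫ x' in Set.Icc y' 1,
          Real.exp (-(s * (a * ∏ j, x' j))) := by
      have hmp := (volume_preserving_piFinSuccAbove (fun _ : Fin (d+2) => ℝ) 0).symm
      have hemb :=
        (MeasurableEquiv.piFinSuccAbove (fun _ : Fin (d+2) => ℝ) 0).symm.measurableEmbedding
      have hpre : (MeasurableEquiv.piFinSuccAbove (fun _ : Fin (d+2) => ℝ) 0).symm ⁻¹'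
          (Set.Icc y 1) = (Set.Icc (y 0) 1) ×ˢ (Set.Icc y' 1) := by
        ext ⟨a, x'⟩
        simp only [Set.mem_preimage, MeasurableEquiv.piFinSuccAbove_symm_apply, Set.mem_Icc,
          Set.mem_prod, Pi.le_def, Fin.insertNthEquiv, Equiv.coe_fn_mk, Fin.insertNth_zero]
        constructor
        · rintro ⟨h1, h2⟩
          refine ⟨⟨h1 0, h2 0⟩, fun j => (by simpa [hy'def] using h1 j.succ),
            fun j => (by simpa using h2 j.succ)⟩
        · rintro ⟨⟨ha1, ha2⟩, h1, h2⟩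
          constructor <;> intro j <;> refine Fin.cases ?_ ?_ j <;>
            simp_all [hy'def, Fin.cons_zero, Fin.cons_succ] <;> exact fun i => h1 i
      rw [← hmp.setIntegral_preimage_emb hemb (fun x => Real.exp (-(s * ∏ j, x j))), hpre]
      have hfe : ∀ p : ℝ × (Fin (d+1) → ℝ),
          Real.exp (-(s * ∏ j,
            ((MeasurableEquiv.piFinSuccAbove (fun _ : Fin (d+2) => ℝ) 0).symm p) j))
            = Real.exp (-(s * (p.1 * ∏ j, p.2 j))) := by
        intro p
        simp [MeasurableEquiv.piFinSuccAbove_symm_apply, Fin.insertNthEquiv, Fin.insertNth_zero,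
          Fin.prod_univ_succ]
      simp_rw [hfe]
      rw [Measure.volume_eq_prod]
      rw [MeasureTheory.setIntegral_prod]
      apply ContinuousOn.integrableOn_compact
      · exact (isCompact_Icc.prod isCompact_Icc)
      · exact Continuous.continuousOn (by fun_prop)
    -- inner ≤ bound pointwise on Icc
    have hinb : ∀ a ∈ Set.Icc (y 0) 1,
        (∫ x' in Set.Icc y' 1, Real.exp (-(s * (a * ∏ j, x' j)))) ≤ bound a := by
      intro a ha
      have ha0 : 0 < a := lt_of_lt_of_le hy0 ha.1
      have haP'le : a * P' ≤ a := by nlinarith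
      have haP'pos : 0 < a * P' := by positivity
      have hPle : P ≤ a * P' := by
        rw [hPP]; exact mul_le_mul_of_nonneg_right ha.1 hP'.le
      set f : ℝ → ℝ := fun w => (Real.log w - Real.log (a*P'))^d * Real.exp (-(s*w))
        with hfdef
      have hfcont : ContinuousOn f (Set.uIcc (a*P') a) := by
        apply ContinuousOn.mul ?_ (Continuous.continuousOn (by fun_prop))
        apply ContinuousOn.pow
        apply ContinuousOn.sub ?_ continuousOn_const
        apply Real.continuousOn_log.mono
        intro w hw
        rw [Set.uIcc_of_le haP'le] at hw
        exact ne_of_gt (lt_of_lt_of_le haP'pos hw.1)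
      calc (∫ x' in Set.Icc y' 1, Real.exp (-(s * (a * ∏ j, x' j))))
          = ∫ x' in Set.Icc y' 1, Real.exp (-((s*a) * ∏ j, x' j)) := by
            simp_rw [mul_assoc]
        _ ≤ ∫ u in P'..1, (Real.log u - Real.log P')^d * Real.exp (-((s*a)*u)) :=
            ih (s*a) (by positivity) y' hy'pos hy'le
        _ = ∫ u in P'..1, f (a*u) := by
            apply intervalIntegral.integral_congr
            intro u hu
            rw [Set.uIcc_of_le hP'1] at hu
            have hu0 : 0 < u := lt_of_lt_of_le hP' hu.1
            simp only [hfdef]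
            rw [Real.log_mul (ne_of_gt ha0) (ne_of_gt hu0),
              Real.log_mul (ne_of_gt ha0) (ne_of_gt hP')]
            ring_nf
        _ = a⁻¹ • ∫ w in (a*P')..(a*1), f w :=
            intervalIntegral.integral_comp_mul_left f (ne_of_gt ha0)
        _ ≤ bound a := by
            rw [mul_one, smul_eq_mul, hbdef]
            apply mul_le_mul_of_nonneg_left ?_ (inv_nonneg.2 ha0.le)
            apply intervalIntegral.integral_mono_on haP'le
              (hfcont.intervalIntegrable) (hgint _ _)
            intro w hw
            have hw0 : 0 < w := lt_of_lt_of_le haP'pos hw.1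
            have hwP : P ≤ w := le_trans hPle hw.1
            rw [hgdef]
            simp only
            rw [max_eq_left hwP]
            apply mul_le_mul_of_nonneg_right ?_ (Real.exp_nonneg _)
            apply pow_le_pow_left₀
            · rw [sub_nonneg]; exact Real.log_le_log haP'pos hw.1
            · have := Real.log_le_log hP hPle
              linarith
    -- integrability of inner
    have hinner_int : IntegrableOn
        (fun a => ∫ x' in Set.Icc y' 1, Real.exp (-(s * (a * ∏ j, x' j))))
        (Set.Icc (y 0) 1) volume := by
      have hbigF : Integrable (fun p : ℝ × (Fin (d+1) → ℝ) =>
          Real.exp (-(s * (p.1 * ∏ j, p.2 j))))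
          ((volume.restrict (Set.Icc (y 0) 1)).prod (volume.restrict (Set.Icc y' 1))) := by
        rw [Measure.prod_restrict, ← Measure.volume_eq_prod]
        apply ContinuousOn.integrableOn_compact (isCompact_Icc.prod isCompact_Icc)
        exact Continuous.continuousOn (by fun_prop)
      exact hbigF.integral_prod_left
    -- integrability of bound
    have hbound_int : IntegrableOn bound (Set.Icc (y 0) 1) volume := by
      have hcont2 : Continuous fun a : ℝ => ∫ w in (a*P')..a, g w := by
        have h1 := intervalIntegral.continuous_primitive hgint P
        have heq : (fun a : ℝ => ∫ w in (a*P')..a, g w) =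
            fun a => (∫ w in P..a, g w) - ∫ w in P..(a*P'), g w := by
          funext a
          rw [intervalIntegral.integral_interval_sub_left (hgint P a) (hgint P (a*P'))]
        rw [heq]
        exact h1.sub (h1.comp (by fun_prop))
      have : ContinuousOn bound (Set.Icc (y 0) 1) := by
        apply ContinuousOn.mul
        · exact continuousOn_inv₀.mono
            (fun a ha => ne_of_gt (lt_of_lt_of_le hy0 ha.1))
        · exact hcont2.continuousOn
      exact this.integrableOn_compact isCompact_Icc
    -- the swap inequality
    have hswap : (∫ a in Set.Icc (y 0) 1, bound a) ≤
        ∫ w in P..1, (Real.log w - Real.log P)^(d+1) * Real.exp (-(s*w)) := by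
      set S := Set.Icc (y 0) 1 with hSdef
      set R : Set (ℝ×ℝ) := {p : ℝ × ℝ | p.1 * P' < p.2 ∧ p.2 ≤ p.1} with hRdef
      have hRm : MeasurableSet R :=
        (measurableSet_lt (measurable_fst.mul_const P') measurable_snd).inter
          (measurableSet_le measurable_snd measurable_fst)
      set F : ℝ × ℝ → ℝ := R.indicator (fun p => g p.2 / p.1) with hFdef
      have hFmeas : Measurable F :=
        ((hgcont.measurable.comp measurable_snd).div measurable_fst).indicator hRm
      set G2 : ℝ → ℝ := fun w => g w * (Real.log (max w P) - Real.log P) with hG2def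
      have hmaxcont : Continuous fun w : ℝ => Real.log (max w P) - Real.log P := by
        apply Continuous.sub ?_ continuous_const
        apply Real.continuousOn_log.comp_continuous (continuous_id.max continuous_const)
        intro x
        exact ne_of_gt (lt_of_lt_of_le hP (le_max_right _ _))
      have hG2cont : Continuous G2 := hgcont.mul hmaxcont
      -- pointwise formula for bound
      have hb1 : ∀ a ∈ S, bound a = ∫ w, F (a, w) := by
        intro a ha
        have ha0 : 0 < a := lt_of_lt_of_le hy0 ha.1
        have haP'le : a * P' ≤ a := by nlinarith
        have hfw : (fun w => F (a,w)) = Set.indicator (Set.Ioc (a*P') a)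
            (fun w => g w / a) := by
          funext w
          by_cases h : w ∈ Set.Ioc (a*P') a
          · rw [Set.indicator_of_mem h, hFdef,
              Set.indicator_of_mem (by rw [hRdef]; exact ⟨h.1, h.2⟩)]
          · rw [Set.indicator_of_notMem h, hFdef, Set.indicator_of_notMem]
            intro hmem
            rw [hRdef] at hmem
            exact h ⟨hmem.1, hmem.2⟩
        calc bound a = a⁻¹ * ∫ w in Set.Ioc (a*P') a, g w := by
              rw [hbdef]; simp only
              rw [intervalIntegral.integral_of_le haP'le]
          _ = ∫ w in Set.Ioc (a*P') a, g w / a := by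
              rw [integral_div]; ring
          _ = ∫ w, Set.indicator (Set.Ioc (a*P') a) (fun w => g w / a) w :=
              (integral_indicator measurableSet_Ioc).symm
          _ = ∫ w, F (a,w) := by rw [hfw]
      -- integrability of F
      have hFint : Integrable F ((volume.restrict S).prod volume) := by
        apply Integrable.mono'
          (g := Set.indicator (S ×ˢ Set.Icc (0:ℝ) 1) (fun _ => (-Real.log P)^d / y 0))
        · rw [integrable_indicator_iff (measurableSet_Icc.prod measurableSet_Icc)]
          refine integrableOn_const (ne_of_lt ?_) enorm_ne_top
          rw [Measure.prod_prod]
          apply ENNReal.mul_lt_top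
          · apply lt_of_le_of_lt (Measure.restrict_apply_le _ _)
            rw [Real.volume_Icc]; exact ENNReal.ofReal_lt_top
          · rw [Real.volume_Icc]; exact ENNReal.ofReal_lt_top
        · exact hFmeas.aestronglyMeasurable
        · have hae : ∀ᵐ p ∂((volume.restrict S).prod (volume : Measure ℝ)), p.1 ∈ S := by
            have heq := Measure.prod_restrict (μ := (volume : Measure ℝ))
              (ν := (volume : Measure ℝ)) S (Set.univ : Set ℝ)
            rw [Measure.restrict_univ] at heq
            rw [heq]
            filter_upwards [ae_restrict_mem (measurableSet_Icc.prod MeasurableSet.univ)]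
              with p hp
            exact hp.1
          filter_upwards [hae] with p hp
          by_cases hpR : p ∈ R
          · rw [hFdef, Set.indicator_of_mem hpR]
            have hp1pos : 0 < p.1 := lt_of_lt_of_le hy0 hp.1
            have hp2pos : 0 < p.2 :=
              lt_of_le_of_lt (mul_nonneg (le_trans hy0.le hp.1) hP'.le) hpR.1
            have hp21 : p.2 ≤ 1 := le_trans hpR.2 hp.2
            have hnegP : 0 ≤ -Real.log P := by
              have := Real.log_nonpos hP.le hP1; linarith
            rw [Set.indicator_of_mem
              (Set.mem_prod.2 ⟨hp, Set.mem_Icc.2 ⟨hp2pos.le, hp21⟩⟩)]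
            have hgle : g p.2 ≤ (-Real.log P)^d := by
              rw [hgdef]; simp only
              have hb1' : Real.log (max p.2 P) ≤ 0 :=
                Real.log_nonpos (le_max_of_le_left hp2pos.le) (max_le hp21 hP1)
              have hb2' : Real.log P ≤ Real.log (max p.2 P) :=
                Real.log_le_log hP (le_max_right _ _)
              calc (Real.log (max p.2 P) - Real.log P) ^ d * Real.exp (-(s * p.2))
                  ≤ (-Real.log P) ^ d * 1 := by
                    apply mul_le_mul (pow_le_pow_left₀ (by linarith) (by linarith) d)
                      (Real.exp_le_one_iff.2 (by nlinarith)) (Real.exp_nonneg _)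
                      (pow_nonneg hnegP d)
                _ = (-Real.log P) ^ d := mul_one _
            rw [Real.norm_eq_abs, abs_div, abs_of_pos hp1pos,
              abs_of_nonneg (hgnonneg p.2)]
            apply div_le_div₀ (pow_nonneg hnegP d) hgle hy0 hp.1
          · rw [hFdef, Set.indicator_of_notMem hpR]
            simp only [norm_zero]
            apply Set.indicator_nonneg
            intro x _
            have hlogP0 : Real.log P ≤ 0 := Real.log_nonpos hP.le hP1
            apply div_nonneg (pow_nonneg (by linarith) _) hy0.le
      -- the section inequality
      have hw_le : ∀ w, (∫ a in S, F (a,w)) ≤ Set.indicator (Set.Ioc P 1) G2 w := by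
        intro w
        have hsec : (fun a => F (a, w)) = Set.indicator {a : ℝ | w ≤ a ∧ a < w/P'}
            (fun a => g w / a) := by
          funext a
          by_cases h : a ∈ {a : ℝ | w ≤ a ∧ a < w/P'}
          · rw [Set.indicator_of_mem h, hFdef, Set.indicator_of_mem]
            exact ⟨(lt_div_iff₀ hP').1 h.2, h.1⟩
          · rw [Set.indicator_of_notMem h, hFdef, Set.indicator_of_notMem]
            intro hmem
            exact h ⟨hmem.2, (lt_div_iff₀ hP').2 hmem.1⟩
        have hIcoeq : {a : ℝ | w ≤ a ∧ a < w/P'} = Set.Ico w (w/P') := rfl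
        have : (∫ a in S, F (a,w)) = ∫ a in S ∩ Set.Ico w (w/P'), g w / a := by
          simp_rw [hsec, hIcoeq]
          rw [setIntegral_indicator measurableSet_Ico]
        rw [this]
        by_cases hw : w ∈ Set.Ioc P 1
        · rw [Set.indicator_of_mem hw]
          have hw0 : 0 < w := lt_trans hP hw.1
          set A := max (y 0) w with hA
          set B := min 1 (w/P') with hB
          have hA0 : 0 < A := lt_of_lt_of_le hy0 (le_max_left _ _)
          have hsub : S ∩ Set.Ico w (w/P') ⊆ Set.Icc A B := by
            rintro a ⟨⟨h1,h2⟩,h3,h4⟩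
            exact ⟨max_le h1 h3, le_min h2 h4.le⟩
          have hG2w : 0 ≤ G2 w := by
            apply mul_nonneg (hgnonneg w)
            have := Real.log_le_log hP (le_max_right w P)
            linarith
          by_cases hAB : A ≤ B
          · have hB0 : 0 < B := lt_of_lt_of_le hA0 hAB
            have hcontAB : IntegrableOn (fun a : ℝ => g w / a) (Set.Icc A B) volume := by
              apply ContinuousOn.integrableOn_compact isCompact_Icc
              apply ContinuousOn.div continuousOn_const continuousOn_id
              intro a haa
              exact ne_of_gt (lt_of_lt_of_le hA0 haa.1)
            calc (∫ a in S ∩ Set.Ico w (w/P'), g w / a)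
                ≤ ∫ a in Set.Icc A B, g w / a := by
                  apply setIntegral_mono_set hcontAB
                  · filter_upwards [ae_restrict_mem measurableSet_Icc] with a haa
                    have : 0 < a := lt_of_lt_of_le hA0 haa.1
                    exact div_nonneg (hgnonneg w) this.le
                  · exact HasSubset.Subset.eventuallyLE hsub
              _ = g w * ∫ a in Set.Icc A B, a⁻¹ := by
                  simp_rw [div_eq_mul_inv]
                  exact integral_const_mul _ _
              _ = g w * (Real.log B - Real.log A) := by
                  rw [integral_Icc_eq_integral_Ioc, ← intervalIntegral.integral_of_le hAB,
                    integral_inv (by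
                      rw [Set.uIcc_of_le hAB]
                      intro hmem
                      exact absurd hmem.1 (not_le.2 hA0)),
                    Real.log_div (ne_of_gt hB0) (ne_of_gt hA0)]
              _ ≤ G2 w := by
                  rw [hG2def]; simp only
                  rw [max_eq_left hw.1.le]
                  apply mul_le_mul_of_nonneg_left ?_ (hgnonneg w)
                  have h1 : Real.log B ≤ Real.log (w/P') :=
                    Real.log_le_log hB0 (min_le_right _ _)
                  have h2 : Real.log (y 0) ≤ Real.log A :=
                    Real.log_le_log hy0 (le_max_left _ _)
                  rw [Real.log_div (ne_of_gt hw0) (ne_of_gt hP')] at h1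
                  have hlogP : Real.log P = Real.log (y 0) + Real.log P' := by
                    rw [hPP, Real.log_mul (ne_of_gt hy0) (ne_of_gt hP')]
                  linarith
          · have hemp : S ∩ Set.Ico w (w/P') = ∅ := by
              rw [Set.eq_empty_iff_forall_notMem]
              intro a haa
              have := hsub haa
              exact hAB (le_trans this.1 this.2)
            rw [hemp, Measure.restrict_empty, integral_zero_measure]
            exact hG2w
        · rw [Set.indicator_of_notMem hw]
          have hemp : S ∩ Set.Ico w (w/P') = ∅ := by
            rw [Set.eq_empty_iff_forall_notMem]
            rintro a ⟨⟨h1,h2⟩,h3,h4⟩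
            apply hw
            constructor
            · have h5 : a * P' < w := (lt_div_iff₀ hP').1 h4
              have : P ≤ a * P' := by
                rw [hPP]; exact mul_le_mul_of_nonneg_right h1 hP'.le
              linarith
            · exact le_trans h3 h2
          rw [hemp, Measure.restrict_empty, integral_zero_measure]
      -- final chain
      have hLint : Integrable (fun w => ∫ a in S, F (a,w)) volume :=
        hFint.integral_prod_right
      have hRint : Integrable (Set.indicator (Set.Ioc P 1) G2) volume := by
        rw [integrable_indicator_iff measurableSet_Ioc]
        exact ((hG2cont.continuousOn).integrableOn_compact isCompact_Icc).mono_set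
          Set.Ioc_subset_Icc_self
      calc (∫ a in S, bound a) = ∫ a in S, ∫ w, F (a,w) :=
            setIntegral_congr_fun measurableSet_Icc hb1
        _ = ∫ w, ∫ a in S, F (a,w) := integral_integral_swap hFint
        _ ≤ ∫ w, Set.indicator (Set.Ioc P 1) G2 w := integral_mono hLint hRint hw_le
        _ = ∫ w in Set.Ioc P 1, G2 w := integral_indicator measurableSet_Ioc
        _ = ∫ w in P..1, G2 w := (intervalIntegral.integral_of_le hP1).symm
        _ = ∫ w in P..1, (Real.log w - Real.log P)^(d+1) * Real.exp (-(s*w)) := by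
            apply intervalIntegral.integral_congr
            intro w hwm
            rw [Set.uIcc_of_le hP1] at hwm
            rw [hG2def, hgdef]
            simp only
            rw [max_eq_left hwm.1]
            ring
    calc (∫ x in Set.Icc y 1, Real.exp (-(s * ∏ j, x j)))
        = ∫ a in Set.Icc (y 0) 1, ∫ x' in Set.Icc y' 1,
            Real.exp (-(s * (a * ∏ j, x' j))) := hsplit
      _ ≤ ∫ a in Set.Icc (y 0) 1, bound a :=
          setIntegral_mono_on hinner_int hbound_int measurableSet_Icc hinb
      _ ≤ _ := hswap

/-- For `d ≥ 2`, `s > 0` and `y ∈ [0,1]^d` with `|y| > 0`: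
`c_{1,s}(y) ≤ ∫_{s|y|}^{s} (log w - log(s|y|))^{d-1} e^{-w} dw`. -/
theorem stmt5 (d : ℕ) (hd : 2 ≤ d) (s : ℝ) (hs : 0 < s)
    (y : Fin d → ℝ) (hy : y ∈ cube d) (hvy : 0 < pvol y) :
    cAS 1 s y ≤
      ∫ w in (s * pvol y)..s,
        (Real.log w - Real.log (s * pvol y)) ^ (d - 1) * Real.exp (-w) := by
  obtain ⟨m, rfl⟩ : ∃ m, d = m + 1 := ⟨d - 1, by omega⟩
  rw [cube, Set.mem_Icc] at hy
  have hyle : ∀ j, y j ≤ 1 := fun j => hy.2 j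
  have hy0 : ∀ j, 0 ≤ y j := fun j => hy.1 j
  have hyj : ∀ j, 0 < y j := by
    intro j
    rcases eq_or_lt_of_le (hy0 j) with h | h
    · exfalso
      have : pvol y = 0 := Finset.prod_eq_zero (Finset.mem_univ j) h.symm
      rw [this] at hvy; exact lt_irrefl 0 hvy
    · exact h
  set P : ℝ := ∏ j, y j with hPdef
  have hP : 0 < P := Finset.prod_pos fun j _ => hyj j
  have hPvol : pvol y = P := rfl
  -- rewrite cAS as an integral over the box
  have hset : cube (m+1) ∩ {x : Fin (m+1) → ℝ | y ≤ x} = Set.Icc y 1 := by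
    ext x
    simp only [cube, Set.mem_inter_iff, Set.mem_Icc, Set.mem_setOf_eq]
    constructor
    · rintro ⟨⟨_, h2⟩, h3⟩; exact ⟨h3, h2⟩
    · rintro ⟨h1, h2⟩; exact ⟨⟨le_trans hy.1 h1, h2⟩, h1⟩
  have hcas : cAS 1 s y = s * ∫ x in Set.Icc y 1, Real.exp (-(s * ∏ j, x j)) := by
    have hms : MeasurableSet {x : Fin (m+1) → ℝ | y ≤ x} := by
      have h : {x : Fin (m+1) → ℝ | y ≤ x} = Set.Ici y := rfl
      rw [h]; exact measurableSet_Ici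
    rw [cAS, setIntegral_indicator hms, hset]
    simp [pvol]
  rw [hcas]
  have hkey := key m s hs y hyj hyle
  have hle : s * (∫ x in Set.Icc y 1, Real.exp (-(s * ∏ j, x j))) ≤
      s * ∫ u in P..1, (Real.log u - Real.log P)^m * Real.exp (-(s*u)) :=
    mul_le_mul_of_nonneg_left hkey hs.le
  apply le_trans hle
  -- change of variables w = s u
  set f : ℝ → ℝ := fun w => (Real.log w - Real.log (s*P))^m * Real.exp (-w) with hfdef
  have hcongr : (∫ u in P..1, (Real.log u - Real.log P)^m * Real.exp (-(s*u))) =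
      ∫ u in P..1, f (s*u) := by
    apply intervalIntegral.integral_congr
    intro u hu
    rw [Set.uIcc_of_le (Finset.prod_le_one (fun j _ => (hyj j).le) (fun j _ => hyle j))] at hu
    have hu0 : 0 < u := lt_of_lt_of_le hP hu.1
    rw [hfdef]
    simp only
    rw [Real.log_mul (ne_of_gt hs) (ne_of_gt hu0),
      Real.log_mul (ne_of_gt hs) (ne_of_gt hP)]
    ring_nf
  rw [hcongr, intervalIntegral.integral_comp_mul_left f (ne_of_gt hs)]
  rw [smul_eq_mul, ← mul_assoc, mul_inv_cancel₀ (ne_of_gt hs), one_mul, mul_one]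
  rw [hPvol]
  simp [hfdef]
end

section
/- For every d ∈ ℕ, every α > 0, every s > 0 and every i ∈ ℕ, the identity s ∫_{[0,1]^d} c_{α,s}(x)^i dx = s^{i+1} ∫_{([0,1]^d)^i} |z_1 ∧ ⋯ ∧ z_i| · exp( −α s Σ_{j=1}^{i} |z_j| ) d(z_1,…,z_i) holds. -/
open MeasureTheory

lemma cAS_eq {d : ℕ} (α s : ℝ) {y : Fin d → ℝ} (hy : 0 ≤ y) :
    cAS α s y = s * ∫ x, Set.indicator (Set.Icc y 1)
      (fun x => Real.exp (-(α * s * pvol x))) x := by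
  have h1 : {x : Fin d → ℝ | y ≤ x} = Set.Ici y := rfl
  have h2 : cube d ∩ Set.Ici y = Set.Icc y 1 := by
    ext w
    simp only [cube, Set.mem_inter_iff, Set.mem_Icc, Set.mem_Ici]
    exact ⟨fun h => ⟨h.2, h.1.2⟩, fun h => ⟨⟨le_trans hy h.1, h.2⟩, h.1⟩⟩
  rw [cAS, h1, ← integral_indicator (by exact measurableSet_Icc),
    Set.indicator_indicator, h2]

/-- The representation
`s ∫_{[0,1]^d} c_{α,s}(x)^i dx
  = s^{i+1} ∫_{([0,1]^d)^i} |z_1 ∧ ⋯ ∧ z_i| e^{-α s Σ_j |z_j|} d(z_1,…,z_i)`. -/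
theorem stmt6 (d : ℕ) (hd : 1 ≤ d) (α s : ℝ) (hα : 0 < α) (hs : 0 < s)
    (i : ℕ) (hi : 1 ≤ i) :
    s * ∫ x in cube d, (cAS α s x) ^ i =
      s ^ (i + 1) * ∫ z in Set.Icc (0 : Fin i → Fin d → ℝ) 1,
        pvol (fun j => ⨅ k, z k j) * Real.exp (-(α * s * ∑ k, pvol (z k))) := by
  classical
  have hine : Nonempty (Fin i) := ⟨⟨0, hi⟩⟩
  set E : (Fin i → Fin d → ℝ) → ℝ :=
    fun z => Real.exp (-(α * s * ∑ k, pvol (z k))) with hE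
  set S : Set ((Fin d → ℝ) × (Fin i → Fin d → ℝ)) :=
    {p | p.1 ∈ cube d ∧ ∀ k, p.1 ≤ p.2 k ∧ p.2 k ≤ 1} with hS
  set g : ((Fin d → ℝ) × (Fin i → Fin d → ℝ)) → ℝ :=
    S.indicator (fun p => E p.2) with hg
  -- measurability of S
  have hSm : MeasurableSet S := by
    have : S = ({p : (Fin d → ℝ) × (Fin i → Fin d → ℝ) | p.1 ∈ cube d}) ∩
        (⋂ k, (⋂ j, {p : (Fin d → ℝ) × (Fin i → Fin d → ℝ) | p.1 j ≤ p.2 k j}) ∩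
          (⋂ j, {p : (Fin d → ℝ) × (Fin i → Fin d → ℝ) | p.2 k j ≤ 1})) := by
      ext p
      simp only [hS, Set.mem_setOf_eq, Set.mem_inter_iff, Set.mem_iInter, Pi.le_def]
      constructor
      · rintro ⟨h1, h2⟩
        exact ⟨h1, fun k => ⟨fun j => (h2 k).1 j, fun j => (h2 k).2 j⟩⟩
      · rintro ⟨h1, h2⟩
        exact ⟨h1, fun k => ⟨fun j => (h2 k).1 j, fun j => (h2 k).2 j⟩⟩
    rw [this]
    refine MeasurableSet.inter (measurableSet_Icc.preimage measurable_fst) ?_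
    refine MeasurableSet.iInter fun k => MeasurableSet.inter ?_ ?_
    · exact MeasurableSet.iInter fun j => measurableSet_le (by fun_prop) (by fun_prop)
    · exact MeasurableSet.iInter fun j => measurableSet_le (by fun_prop) measurable_const
  -- E is measurable and bounded on the relevant region
  have hEmeas : Measurable E := by
    apply Measurable.comp Real.measurable_exp
    apply Measurable.neg
    apply Measurable.const_mul
    exact Finset.measurable_sum _ fun k _ =>
      Finset.measurable_prod _ fun j _ =>
        (measurable_pi_apply j).comp (measurable_pi_apply k)
  -- integrability of g on the product space
  have hInt : Integrable g ((volume : Measure (Fin d → ℝ)).prod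
      (volume : Measure (Fin i → Fin d → ℝ))) := by
    have hgm : AEStronglyMeasurable g ((volume : Measure (Fin d → ℝ)).prod
        (volume : Measure (Fin i → Fin d → ℝ))) :=
      ((hEmeas.comp measurable_snd).indicator hSm).aestronglyMeasurable
    set T : Set ((Fin d → ℝ) × (Fin i → Fin d → ℝ)) :=
      (Set.Icc 0 1) ×ˢ (Set.Icc 0 1) with hT
    have hTfin : ((volume : Measure (Fin d → ℝ)).prod
        (volume : Measure (Fin i → Fin d → ℝ))) T < ⊤ := by
      rw [hT, Measure.prod_prod]
      exact ENNReal.mul_lt_top (isCompact_Icc.measure_lt_top)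
        (isCompact_Icc.measure_lt_top)
    have hbound : Integrable (T.indicator (fun _ => (1:ℝ)))
        ((volume : Measure (Fin d → ℝ)).prod (volume : Measure (Fin i → Fin d → ℝ))) := by
      rw [integrable_indicator_iff (measurableSet_Icc.prod measurableSet_Icc)]
      exact integrableOn_const hTfin.ne
    refine hbound.mono' hgm (Filter.Eventually.of_forall fun p => ?_)
    by_cases hp : p ∈ S
    · have hz01 : ∀ k, 0 ≤ p.2 k ∧ p.2 k ≤ 1 := fun k =>
        ⟨le_trans hp.1.1 (hp.2 k).1, (hp.2 k).2⟩
      have hpT : p ∈ T := by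
        refine ⟨hp.1, ?_, ?_⟩
        · intro k; exact (hz01 k).1
        · intro k; exact (hz01 k).2
      have hE1 : E p.2 ≤ 1 := by
        rw [hE]
        refine Real.exp_le_one_iff.2 (neg_nonpos.2 (mul_nonneg (le_of_lt (mul_pos hα hs)) ?_))
        refine Finset.sum_nonneg fun k _ => Finset.prod_nonneg fun j _ => ?_
        exact (hz01 k).1 j
      have hE0 : 0 ≤ E p.2 := Real.exp_nonneg _
      rw [hg, Set.indicator_of_mem hp, Set.indicator_of_mem hpT]
      rw [Real.norm_eq_abs, abs_of_nonneg hE0]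
      exact hE1
    · rw [hg, Set.indicator_of_notMem hp]
      simpa using Set.indicator_nonneg (fun _ _ => zero_le_one) p
  -- key pointwise identity: for x in the cube, (cAS α s x)^i = s^i * ∫ z, g (x, z)
  have step1 : ∀ x ∈ cube d, (cAS α s x) ^ i = s ^ i * ∫ z, g (x, z) := by
    intro x hx
    rw [cAS_eq α s hx.1, mul_pow]
    congr 1
    have hcard : (∫ w, Set.indicator (Set.Icc x 1)
        (fun w => Real.exp (-(α * s * pvol w))) w) ^ i
        = (∫ w, Set.indicator (Set.Icc x 1)
            (fun w => Real.exp (-(α * s * pvol w))) w) ^ (Fintype.card (Fin i)) := by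
      simp
    rw [hcard, ← MeasureTheory.integral_fintype_prod_eq_pow
      (fun w => Set.indicator (Set.Icc x 1) (fun w => Real.exp (-(α * s * pvol w))) w)]
    refine integral_congr_ae (Filter.Eventually.of_forall fun z => ?_)
    show (∏ k, Set.indicator (Set.Icc x 1)
        (fun w => Real.exp (-(α * s * pvol w))) (z k)) = g (x, z)
    by_cases hz : ∀ k, x ≤ z k ∧ z k ≤ 1
    · have hmem : (x, z) ∈ S := ⟨hx, hz⟩
      have heach : ∀ k : Fin i, Set.indicator (Set.Icc x 1)
          (fun w => Real.exp (-(α * s * pvol w))) (z k)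
          = Real.exp (-(α * s * pvol (z k))) := fun k =>
        Set.indicator_of_mem (Set.mem_Icc.2 (hz k)) _
      rw [hg]
      simp only [Set.indicator_of_mem hmem]
      calc ∏ k, Set.indicator (Set.Icc x 1)
            (fun w => Real.exp (-(α * s * pvol w))) (z k)
          = ∏ k, Real.exp (-(α * s * pvol (z k))) := by
            exact Finset.prod_congr rfl fun k _ => heach k
        _ = Real.exp (∑ k, -(α * s * pvol (z k))) := (Real.exp_sum _ _).symm
        _ = E z := by rw [hE]; congr 1; rw [Finset.mul_sum, ← Finset.sum_neg_distrib]
    · obtain ⟨k, hk⟩ := not_forall.mp hz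
      have h0 : Set.indicator (Set.Icc x 1)
          (fun w => Real.exp (-(α * s * pvol w))) (z k) = 0 :=
        Set.indicator_of_notMem (by simpa [Set.mem_Icc] using hk) _
      rw [Finset.prod_eq_zero (Finset.mem_univ k) h0, hg,
        Set.indicator_of_notMem (fun hmem => hk (hmem.2 k))]
  -- inner integral computation
  have step4 : ∀ z : Fin i → Fin d → ℝ, (∫ x, g (x, z)) =
      Set.indicator (Set.Icc (0 : Fin i → Fin d → ℝ) 1)
        (fun z => pvol (fun j => ⨅ k, z k j) * E z) z := by
    intro z
    by_cases hz : z ∈ Set.Icc (0 : Fin i → Fin d → ℝ) 1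
    · set m : Fin d → ℝ := fun j => ⨅ k, z k j with hm
      have hbdd : ∀ j, BddBelow (Set.range fun k => z k j) :=
        fun j => (Set.finite_range _).bddBelow
      have hzk0 : ∀ k j, (0:ℝ) ≤ z k j := fun k j => hz.1 k j
      have hzk1 : ∀ k j, z k j ≤ 1 := fun k j => hz.2 k j
      have hmk : ∀ k j, m j ≤ z k j := fun k j => ciInf_le (hbdd j) k
      have hm0 : (0 : Fin d → ℝ) ≤ m := fun j => le_ciInf fun k => hzk0 k j
      have key : ∀ x, g (x, z) = Set.indicator (Set.Icc 0 m) (fun _ => E z) x := by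
        intro x
        by_cases hxm : x ∈ Set.Icc (0 : Fin d → ℝ) m
        · have k0 : Fin i := ⟨0, hi⟩
          have hmem : (x, z) ∈ S := by
            refine ⟨⟨hxm.1, fun j => ?_⟩, fun k => ⟨fun j => ?_, fun j => hzk1 k j⟩⟩
            · exact le_trans (hxm.2 j) (le_trans (hmk k0 j) (hzk1 k0 j))
            · exact le_trans (hxm.2 j) (hmk k j)
          rw [hg, Set.indicator_of_mem hmem, Set.indicator_of_mem hxm]
        · have hns : (x, z) ∉ S := by
            intro hmem
            exact hxm ⟨hmem.1.1, fun j => le_ciInf fun k => (hmem.2 k).1 j⟩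
          rw [hg, Set.indicator_of_notMem hns, Set.indicator_of_notMem hxm]
      rw [Set.indicator_of_mem hz]
      calc (∫ x, g (x, z))
          = ∫ x, Set.indicator (Set.Icc 0 m) (fun _ => E z) x := by simp_rw [key]
        _ = ((volume : Measure (Fin d → ℝ)) (Set.Icc 0 m)).toReal • E z :=
            integral_indicator_const _ measurableSet_Icc
        _ = pvol m * E z := by
            rw [Real.volume_Icc_pi_toReal hm0, smul_eq_mul]
            congr 1
            simp [pvol]
    · have hz0 : ∀ x, g (x, z) = 0 := by
        intro x
        refine Set.indicator_of_notMem (fun hmem => hz ⟨?_, fun k => (hmem.2 k).2⟩) _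
        exact fun k => le_trans hmem.1.1 (hmem.2 k).1
      rw [Set.indicator_of_notMem hz]
      simp [hz0]
  -- assemble
  calc s * ∫ x in cube d, (cAS α s x) ^ i
      = s * ∫ x in cube d, s ^ i * ∫ z, g (x, z) := by
        congr 1
        refine setIntegral_congr_fun (by exact measurableSet_Icc) ?_
        intro x hx
        exact step1 x hx
    _ = s ^ (i + 1) * ∫ x in cube d, ∫ z, g (x, z) := by
        rw [integral_const_mul]; ring
    _ = s ^ (i + 1) * ∫ x, ∫ z, g (x, z) := by
        congr 1
        refine setIntegral_eq_integral_of_forall_compl_eq_zero fun x hx => ?_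
        have : ∀ z, g (x, z) = 0 := fun z =>
          Set.indicator_of_notMem (fun hmem => hx hmem.1) _
        simp [this]
    _ = s ^ (i + 1) * ∫ z, ∫ x, g (x, z) := by
        congr 1
        exact integral_integral_swap hInt
    _ = s ^ (i + 1) * ∫ z, Set.indicator (Set.Icc (0 : Fin i → Fin d → ℝ) 1)
          (fun z => pvol (fun j => ⨅ k, z k j) * E z) z := by
        congr 1
        exact integral_congr_ae (Filter.Eventually.of_forall step4)
    _ = s ^ (i + 1) * ∫ z in Set.Icc (0 : Fin i → Fin d → ℝ) 1,
          pvol (fun j => ⨅ k, z k j) * Real.exp (-(α * s * ∑ k, pvol (z k))) := by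
        rw [integral_indicator (by exact measurableSet_Icc)]
end

section
/- For every d ∈ ℕ, every i ∈ ℕ and every α > 0 there exists a constant C > 0, depending only on d, i and α, such that for all s ≥ 1: s ∫_{[0,1]^d} ( s ∫_{[0,1]^d} e^{−α s |x ∨ y|} dx )^i dy ≤ C (1 + log s)^{d−1}. -/
open MeasureTheory

open MeasureTheory Set ENNReal

lemma measurable_pvol {d : ℕ} : Measurable (pvol (d := d)) := by
  unfold pvol; exact Finset.measurable_prod _ (fun j _ => measurable_pi_apply j)

lemma cube_zero : cube 0 = Set.univ := by
  ext x
  simp only [cube, Set.mem_Icc, Set.mem_univ, iff_true]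
  exact ⟨fun i => i.elim0, fun i => i.elim0⟩

lemma measurableSet_cube {d : ℕ} : MeasurableSet (cube d) := measurableSet_Icc

lemma mem_cube_cons {d : ℕ} {u : ℝ} {x : Fin d → ℝ} :
    Fin.cons u x ∈ cube (d+1) ↔ u ∈ Set.Icc (0:ℝ) 1 ∧ x ∈ cube d := by
  simp only [cube, Set.mem_Icc, Pi.le_def]
  constructor
  · rintro ⟨h0, h1⟩
    refine ⟨⟨h0 0, h1 0⟩, fun j => h0 j.succ, fun j => h1 j.succ⟩
  · rintro ⟨⟨hu0, hu1⟩, hx0, hx1⟩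
    constructor
    · intro j; refine Fin.cases ?_ ?_ j <;> simpa [Fin.cons_zero, Fin.cons_succ] using ‹_›
    · intro j; refine Fin.cases ?_ ?_ j <;> simpa [Fin.cons_zero, Fin.cons_succ] using ‹_›

lemma pvol_cons {d : ℕ} (u : ℝ) (x : Fin d → ℝ) : pvol (Fin.cons u x) = u * pvol x := by
  unfold pvol
  rw [Fin.prod_univ_succ]
  simp

lemma lintegral_cube_succ {d : ℕ} (F : (Fin (d+1) → ℝ) → ℝ≥0∞) (hF : Measurable F) :
    ∫⁻ x in cube (d+1), F x
      = ∫⁻ u in Set.Icc (0:ℝ) 1, ∫⁻ x in cube d, F (Fin.cons u x) := by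
  have hmp := (measurePreserving_piFinSuccAbove (fun _ : Fin (d+1) => (volume : Measure ℝ)) 0).symm
  rw [← lintegral_indicator measurableSet_cube]
  have hind : Measurable ((cube (d+1)).indicator F) :=
    hF.indicator measurableSet_cube
  rw [show (volume : Measure (Fin (d+1) → ℝ)) = Measure.pi (fun _ => volume) from volume_pi]
  rw [← hmp.lintegral_comp hind]
  have hmeas : AEMeasurable (fun p : ℝ × (Fin d → ℝ) => (cube (d+1)).indicator F
      ((MeasurableEquiv.piFinSuccAbove (fun _ : Fin (d+1) => ℝ) 0).symm p))
      ((volume : Measure ℝ).prod (Measure.pi fun _ => (volume : Measure ℝ))) :=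
    ((hind.comp (MeasurableEquiv.measurable _))).aemeasurable
  rw [lintegral_prod _ hmeas]
  have key : ∀ (u : ℝ) (x : Fin d → ℝ),
      (cube (d+1)).indicator F
        ((MeasurableEquiv.piFinSuccAbove (fun _ : Fin (d+1) => ℝ) 0).symm (u, x))
      = (Set.Icc (0:ℝ) 1).indicator
          (fun u => (cube d).indicator (fun x => F (Fin.cons u x)) x) u := by
    intro u x
    have he : (MeasurableEquiv.piFinSuccAbove (fun _ : Fin (d+1) => ℝ) 0).symm (u, x)
        = Fin.cons u x := by
      simp [MeasurableEquiv.piFinSuccAbove, Fin.insertNthEquiv, Fin.insertNth_zero']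
    rw [he]
    by_cases hu : u ∈ Set.Icc (0:ℝ) 1 <;> by_cases hx : x ∈ cube d <;>
      simp [Set.indicator_apply, hu, hx, mem_cube_cons]
  simp_rw [key]
  rw [← volume_pi]
  have step : ∀ u:ℝ, (∫⁻ y : (Fin d → ℝ),
      (Icc (0:ℝ) 1).indicator (fun u => (cube d).indicator (fun x => F (Fin.cons u x)) y) u)
      = (Icc (0:ℝ) 1).indicator (fun u => ∫⁻ y in cube d, F (Fin.cons u y)) u := by
    intro u
    by_cases hu : u ∈ Icc (0:ℝ) 1
    · simp only [Set.indicator_of_mem hu, lintegral_indicator measurableSet_cube]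
    · simp only [Set.indicator_of_notMem hu, lintegral_zero]
  simp_rw [step]
  rw [lintegral_indicator measurableSet_Icc]

noncomputable def mlog (v : ℝ) : ℝ := 1 + max 0 (-Real.log v)

lemma one_le_mlog (v : ℝ) : 1 ≤ mlog v := by
  unfold mlog; nlinarith [le_max_left 0 (-Real.log v)]

lemma mlog_nonneg (v : ℝ) : 0 ≤ mlog v := le_trans zero_le_one (one_le_mlog v)

lemma mlog_of_one_le {v : ℝ} (hv : 1 ≤ v) : mlog v = 1 := by
  unfold mlog
  have : Real.log v ≥ 0 := Real.log_nonneg hv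
  rw [max_eq_left (by linarith)]; ring

lemma mlog_of_le_one {v : ℝ} (hv0 : 0 < v) (hv : v ≤ 1) : mlog v = 1 - Real.log v := by
  unfold mlog
  have : Real.log v ≤ 0 := Real.log_nonpos (le_of_lt hv0) hv
  rw [max_eq_right (by linarith)]; ring

lemma lint_Ioc_of_deriv {a b : ℝ} (hab : a ≤ b) {f F : ℝ → ℝ}
    (hd : ∀ x ∈ Icc a b, HasDerivAt F (f x) x)
    (hc : ContinuousOn f (Icc a b)) (hf : ∀ x ∈ Icc a b, 0 ≤ f x) :
    ∫⁻ u in Ioc a b, ENNReal.ofReal (f u) = ENNReal.ofReal (F b - F a) := by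
  have hint : IntegrableOn f (Ioc a b) := (hc.integrableOn_Icc).mono_set Ioc_subset_Icc_self
  rw [← ofReal_integral_eq_lintegral_ofReal hint
    ((ae_restrict_iff' measurableSet_Ioc).2 (ae_of_all _ fun x hx => hf x (Ioc_subset_Icc_self hx)))]
  congr 1
  rw [← intervalIntegral.integral_of_le hab]
  exact intervalIntegral.integral_eq_sub_of_hasDerivAt
    (fun x hx => hd x (by rwa [Set.uIcc_of_le hab] at hx))
    ((hc.mono (by rw [Set.uIcc_of_le hab])).intervalIntegrable)

lemma lint_exp_Ioc {β a b : ℝ} (hβ : 0 < β) (hab : a ≤ b) :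
    ∫⁻ u in Ioc a b, ENNReal.ofReal (β * Real.exp (-(β*u)/2))
      ≤ ENNReal.ofReal (2 * Real.exp (-(β*a)/2)) := by
  have hrw : ∀ u : ℝ, -(β*u)/2 = (-β/2)*u := fun u => by ring
  simp_rw [hrw]
  have h := lint_Ioc_of_deriv hab (f := fun u => β * Real.exp ((-β/2)*u))
    (F := fun u => -2 * Real.exp ((-β/2)*u)) ?_ ?_ ?_
  · rw [h]
    apply ENNReal.ofReal_le_ofReal
    nlinarith [Real.exp_pos ((-β/2)*b), Real.exp_pos ((-β/2)*a)]
  · intro x hx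
    have h1 : HasDerivAt (fun u : ℝ => (-β/2) * u) (-β/2) x := by
      simpa using (hasDerivAt_id x).const_mul (-β/2)
    have h2 := (h1.exp).const_mul (-2)
    rw [show -2 * (Real.exp ((-β/2)*x) * (-β/2)) = β * Real.exp ((-β/2)*x) by ring] at h2
    exact h2
  · exact (continuousOn_const.mul (Real.continuous_exp.comp_continuousOn (by fun_prop)))
  · intro x hx; positivity

lemma hasDerivAt_log_const_mul {β x : ℝ} (hβ : 0 < β) (hx : 0 < x) :
    HasDerivAt (fun u : ℝ => Real.log (β*u)) (1/x) x := by
  have h1 : HasDerivAt (fun u : ℝ => β * u) β x := by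
    simpa using (hasDerivAt_id x).const_mul β
  have h2 := (Real.hasDerivAt_log (by positivity : β*x ≠ 0)).comp x h1
  rw [show (β*x)⁻¹ * β = 1/x by field_simp] at h2
  exact h2

lemma lint_mpow_Ioc {β a b : ℝ} (m : ℕ) (hβ : 0 < β) (ha : 0 < a) (hab : a ≤ b) (hb1 : β*b ≤ 1) :
    ∫⁻ u in Ioc a b, ENNReal.ofReal ((1/u) * (1 - Real.log (β*u))^m)
      ≤ ENNReal.ofReal ((1 - Real.log (β*a))^(m+1) / (m+1)) := by
  have hpos : ∀ x ∈ Icc a b, 0 < x := fun x hx => lt_of_lt_of_le ha hx.1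
  have hnn : ∀ x ∈ Icc a b, 0 ≤ 1 - Real.log (β*x) := by
    intro x hx
    have hx0 := hpos x hx
    have : Real.log (β*x) ≤ 0 :=
      Real.log_nonpos (by positivity) (le_trans (by nlinarith [hx.2]) hb1)
    linarith
  have h := lint_Ioc_of_deriv hab (f := fun u => (1/u) * (1 - Real.log (β*u))^m)
    (F := fun u => (-(1:ℝ)/(m+1)) * (1 - Real.log (β*u))^(m+1)) ?_ ?_ ?_
  · rw [h]
    apply ENNReal.ofReal_le_ofReal
    have h1 : (0:ℝ) ≤ (1 - Real.log (β*b))^(m+1) :=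
      pow_nonneg (hnn b ⟨hab, le_refl b⟩) _
    have h2 : (0:ℝ) < (m:ℝ)+1 := by positivity
    have heq : -1 / ((m:ℝ)+1) * (1 - Real.log (β*b))^(m+1) - -1 / ((m:ℝ)+1) * (1 - Real.log (β*a))^(m+1)
        = ((1 - Real.log (β*a))^(m+1) - (1 - Real.log (β*b))^(m+1)) / ((m:ℝ)+1) := by ring
    rw [heq]
    gcongr
    linarith
  · intro x hx
    have hlog := hasDerivAt_log_const_mul hβ (hpos x hx)
    have hin : HasDerivAt (fun u : ℝ => 1 - Real.log (β*u)) (-(1/x)) x := by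
      simpa using hlog.const_sub (1:ℝ)
    have hp := (hin.pow (m+1)).const_mul (-(1:ℝ)/(m+1))
    rw [show (-(1:ℝ)/(m+1)) * ((↑(m+1)) * (1 - Real.log (β*x)) ^ (m+1-1) * (-(1/x)))
        = (1/x) * (1 - Real.log (β*x))^m by push_cast; field_simp; try ring] at hp
    exact hp
  · apply ContinuousOn.mul
    · exact continuousOn_const.div continuousOn_id (fun x hx => ne_of_gt (hpos x hx))
    · apply ContinuousOn.pow
      apply continuousOn_const.sub
      exact Real.continuousOn_log.comp (continuousOn_const.mul continuousOn_id)
        (fun x hx => by have h := hpos x hx; simp only [Set.mem_compl_iff, Set.mem_singleton_iff]; positivity)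
  · intro x hx
    have h1 := hnn x hx
    have h2 := hpos x hx
    exact mul_nonneg (by positivity) (pow_nonneg h1 _)

lemma lint_logpow_Ioc {t : ℝ} (m : ℕ) (ht : 1 ≤ t) :
    ∫⁻ u in Ioc (1/t) 1, ENNReal.ofReal ((1/u) * (1 + Real.log (t*u))^m)
      ≤ ENNReal.ofReal ((1 + Real.log t)^(m+1)) := by
  have ht0 : (0:ℝ) < t := lt_of_lt_of_le one_pos ht
  have hab : 1/t ≤ 1 := by rw [div_le_one ht0]; exact ht
  have hpos : ∀ x ∈ Icc (1/t) 1, 0 < x := fun x hx => lt_of_lt_of_le (by positivity) hx.1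
  have hnn : ∀ x ∈ Icc (1/t) 1, 0 ≤ 1 + Real.log (t*x) := by
    intro x hx
    have : 1 ≤ t*x := by
      have := hx.1
      rw [div_le_iff₀ ht0] at this
      nlinarith
    nlinarith [Real.log_nonneg this]
  have h := lint_Ioc_of_deriv hab (f := fun u => (1/u) * (1 + Real.log (t*u))^m)
    (F := fun u => ((1:ℝ)/(m+1)) * (1 + Real.log (t*u))^(m+1)) ?_ ?_ ?_
  · rw [h]
    apply ENNReal.ofReal_le_ofReal
    have e1 : t * (1/t) = 1 := by field_simp
    rw [mul_one, e1, Real.log_one]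
    have h2 : (0:ℝ) < (m:ℝ)+1 := by positivity
    have h4 : (1:ℝ) ≤ 1 + Real.log t := by nlinarith [Real.log_nonneg ht]
    have h5 : (1:ℝ) ≤ (1 + Real.log t)^(m+1) := one_le_pow₀ h4
    have h6 : (0:ℝ) ≤ ((m:ℝ)+1)⁻¹ := by positivity
    have h7 : ((m:ℝ)+1)⁻¹ ≤ 1 := by
      rw [inv_le_one_iff₀]; right; linarith
    calc (1:ℝ)/(m+1) * (1 + Real.log t)^(m+1) - 1/(m+1) * (1+0)^(m+1)
        ≤ 1/(m+1) * (1 + Real.log t)^(m+1) := by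
          apply sub_le_self
          positivity
      _ ≤ 1 * (1 + Real.log t)^(m+1) := by
          apply mul_le_mul_of_nonneg_right _ (by positivity)
          rw [one_div]
          exact h7
      _ = (1 + Real.log t)^(m+1) := by ring
  · intro x hx
    have hlog := hasDerivAt_log_const_mul ht0 (hpos x hx)
    have hin : HasDerivAt (fun u : ℝ => 1 + Real.log (t*u)) (1/x) x := by
      simpa using hlog.const_add (1:ℝ)
    have hp := (hin.pow (m+1)).const_mul ((1:ℝ)/(m+1))
    rw [show ((1:ℝ)/(m+1)) * ((↑(m+1)) * (1 + Real.log (t*x)) ^ (m+1-1) * (1/x))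
        = (1/x) * (1 + Real.log (t*x))^m by push_cast; field_simp; try ring] at hp
    exact hp
  · apply ContinuousOn.mul
    · exact continuousOn_const.div continuousOn_id (fun x hx => ne_of_gt (hpos x hx))
    · apply ContinuousOn.pow
      apply continuousOn_const.add
      exact Real.continuousOn_log.comp (continuousOn_const.mul continuousOn_id)
        (fun x hx => by have h := hpos x hx; simp only [Set.mem_compl_iff, Set.mem_singleton_iff]; positivity)
  · intro x hx
    have h1 := hnn x hx
    have h2 := hpos x hx
    exact mul_nonneg (by positivity) (pow_nonneg h1 _)

lemma inv_sqrt_eq_rpow {u : ℝ} (hu : 0 ≤ u) : (Real.sqrt u)⁻¹ = u ^ (-(1/2) : ℝ) := by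
  rw [Real.rpow_neg hu, Real.sqrt_eq_rpow]

lemma lint_inv_sqrt_Ioc {c : ℝ} (hc : 0 < c) :
    ∫⁻ u in Ioc 0 c, ENNReal.ofReal ((Real.sqrt u)⁻¹) ≤ ENNReal.ofReal (2 * Real.sqrt c) := by
  have hcong : ∀ᵐ u ∂(volume.restrict (Ioc (0:ℝ) c)), (Real.sqrt u)⁻¹ = u ^ (-(1/2):ℝ) := by
    rw [ae_restrict_iff' measurableSet_Ioc]
    exact ae_of_all _ (fun u hu => inv_sqrt_eq_rpow (le_of_lt hu.1))
  rw [lintegral_congr_ae (hcong.mono (fun u hu => by rw [hu]))]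
  have hii : IntervalIntegrable (fun x:ℝ => x ^ (-(1/2):ℝ)) volume 0 c :=
    intervalIntegral.intervalIntegrable_rpow' (by norm_num)
  have hint : IntegrableOn (fun u:ℝ => u ^ (-(1/2):ℝ)) (Ioc 0 c) :=
    (intervalIntegrable_iff_integrableOn_Ioc_of_le (le_of_lt hc)).1 hii
  have hnn : (0:ℝ → ℝ) ≤ᵐ[volume.restrict (Ioc (0:ℝ) c)] (fun u:ℝ => u ^ (-(1/2):ℝ)) :=
    (ae_restrict_iff' measurableSet_Ioc).2
      (ae_of_all _ (fun u hu => Real.rpow_nonneg (le_of_lt hu.1) _))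
  rw [← ofReal_integral_eq_lintegral_ofReal hint hnn]
  apply ENNReal.ofReal_le_ofReal
  rw [← intervalIntegral.integral_of_le (le_of_lt hc),
    integral_rpow (Or.inl (by norm_num))]
  rw [show (-(1/2) : ℝ) + 1 = 1/2 by norm_num, Real.zero_rpow (by norm_num : (1/2:ℝ) ≠ 0)]
  rw [Real.sqrt_eq_rpow]
  rw [div_eq_mul_inv]
  norm_num
  rw [mul_comm]

noncomputable def hfun (k : ℕ) (v : ℝ) : ℝ := (mlog v)^k * Real.exp (-v/2)

lemma hfun_nonneg (k : ℕ) (v : ℝ) : 0 ≤ hfun k v := by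
  unfold hfun
  exact mul_nonneg (pow_nonneg (mlog_nonneg v) _) (le_of_lt (Real.exp_pos _))

lemma exp_half_le_inv_sqrt {v : ℝ} (hv : 0 < v) : Real.exp (-v/2) ≤ (Real.sqrt v)⁻¹ := by
  have h2 : Real.sqrt v ≤ Real.exp (v/2) := by
    nlinarith [Real.add_one_le_exp (v/2), Real.sq_sqrt (le_of_lt hv), Real.sqrt_nonneg v]
  have h3 : 0 < Real.sqrt v := Real.sqrt_pos.2 hv
  rw [show -v/2 = -(v/2) by ring, Real.exp_neg]
  exact inv_anti₀ h3 h2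

lemma hfun_le_inv_sqrt (k : ℕ) {v : ℝ} (hv : 0 < v) :
    hfun k v ≤ (1+2*(k:ℝ))^k * (Real.sqrt v)⁻¹ := by
  have hK1 : (1:ℝ) ≤ (1+2*(k:ℝ))^k := one_le_pow₀ (le_add_of_nonneg_right (by positivity))
  have hsv : 0 < Real.sqrt v := Real.sqrt_pos.2 hv
  rcases le_or_gt 1 v with h1 | h1
  · unfold hfun
    rw [mlog_of_one_le h1, one_pow, one_mul]
    calc Real.exp (-v/2) ≤ (Real.sqrt v)⁻¹ := exp_half_le_inv_sqrt hv
      _ ≤ (1+2*(k:ℝ))^k * (Real.sqrt v)⁻¹ := by nlinarith [inv_pos.2 hsv]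
  · rcases Nat.eq_zero_or_pos k with hk | hk
    · subst hk
      unfold hfun
      rw [pow_zero, pow_zero, one_mul, one_mul]
      calc Real.exp (-v/2) ≤ 1 := Real.exp_le_one_iff.2 (by linarith)
        _ ≤ (Real.sqrt v)⁻¹ := by
            exact (one_le_inv_iff₀).2 ⟨hsv, Real.sqrt_le_one.2 (le_of_lt h1)⟩
    · -- 0 < v < 1, k ≥ 1
      have hvinv : 1 ≤ v⁻¹ := (one_le_inv_iff₀ ).2 ⟨hv, le_of_lt h1⟩
      set e : ℝ := 1/(2*(k:ℝ)) with he
      have he0 : 0 < e := by positivity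
      set x : ℝ := v⁻¹ ^ e with hx
      have hx1 : 1 ≤ x := Real.one_le_rpow hvinv (le_of_lt he0)
      have hx0 : 0 < x := lt_of_lt_of_le one_pos hx1
      have hlogx : Real.log x = e * Real.log v⁻¹ := Real.log_rpow (by positivity) e
      have hk0 : (k:ℝ) ≠ 0 := Nat.cast_ne_zero.2 (Nat.pos_iff_ne_zero.1 hk)
      have he2 : 2*(k:ℝ) * e = 1 := by rw [he]; field_simp
      have hlv : Real.log v⁻¹ = 2*(k:ℝ) * Real.log x := by
        rw [hlogx, ← mul_assoc, he2, one_mul]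
      have hlog_le : Real.log x ≤ x := by
        nlinarith [Real.log_le_sub_one_of_pos hx0]
      have hmlog : mlog v = 1 + Real.log v⁻¹ := by
        rw [mlog_of_le_one hv (le_of_lt h1), Real.log_inv]; ring
      have hlvnn : 0 ≤ Real.log v⁻¹ := Real.log_nonneg hvinv
      have hstep : mlog v ≤ (1+2*(k:ℝ)) * x := by
        rw [hmlog, hlv]
        nlinarith [hlog_le, hx1]
      have hpow : (mlog v)^k ≤ ((1+2*(k:ℝ)) * x)^k :=
        pow_le_pow_left₀ (mlog_nonneg v) hstep k
      have hxk : x^k = (Real.sqrt v)⁻¹ := by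
        rw [hx, ← Real.rpow_natCast (v⁻¹ ^ e) k, ← Real.rpow_mul (by positivity)]
        rw [show e * (k:ℝ) = 1/2 by rw [he]; field_simp]
        rw [← Real.sqrt_eq_rpow, Real.sqrt_inv]
      unfold hfun
      calc (mlog v)^k * Real.exp (-v/2) ≤ (mlog v)^k * 1 := by
            apply mul_le_mul_of_nonneg_left (Real.exp_le_one_iff.2 (by linarith))
              (pow_nonneg (mlog_nonneg v) _)
        _ = (mlog v)^k := by ring
        _ ≤ ((1+2*(k:ℝ)) * x)^k := hpow
        _ = (1+2*(k:ℝ))^k * x^k := mul_pow _ _ _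
        _ = (1+2*(k:ℝ))^k * (Real.sqrt v)⁻¹ := by rw [hxk]

lemma exp_neg_half_le_one {v : ℝ} (hv : 0 ≤ v) : Real.exp (-v/2) ≤ 1 :=
  Real.exp_le_one_iff.2 (by linarith)

lemma lint_T3 {β b : ℝ} (m : ℕ) (hβ : 0 < β) (hb0 : 0 < b) (hb1 : b ≤ 1) :
    ∫⁻ u in Ioc b 1, ENNReal.ofReal ((1/u) * (mlog (β*u))^m * Real.exp (-(β*u)/2))
      ≤ ENNReal.ofReal (8 * (mlog (β*b))^(m+1) * Real.exp (-(β*b)/2)) := by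
  have hS1 : (1:ℝ) ≤ (mlog (β*b))^(m+1) := one_le_pow₀ (one_le_mlog _)
  have hE0 : (0:ℝ) < Real.exp (-(β*b)/2) := Real.exp_pos _
  rcases le_or_gt 1 (β*b) with hcase | hcase
  · -- large case: β*b ≥ 1
    have hmono : ∀ u ∈ Ioc b 1, ENNReal.ofReal ((1/u) * (mlog (β*u))^m * Real.exp (-(β*u)/2))
        ≤ ENNReal.ofReal ((1/(b*β)) * (β * Real.exp (-(β*u)/2))) := by
      intro u hu
      apply ENNReal.ofReal_le_ofReal
      have hub : b < u := hu.1
      have hβu : 1 ≤ β*u := le_trans hcase (by nlinarith)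
      rw [mlog_of_one_le hβu, one_pow, mul_one]
      have e1 : (1:ℝ)/u ≤ 1/b := one_div_le_one_div_of_le hb0 hub.le
      calc (1/u) * Real.exp (-(β*u)/2) ≤ (1/b) * Real.exp (-(β*u)/2) :=
            mul_le_mul_of_nonneg_right e1 (Real.exp_pos _).le
        _ = (1/(b*β)) * (β * Real.exp (-(β*u)/2)) := by field_simp
    apply le_trans (setLIntegral_mono' measurableSet_Ioc hmono)
    have hinv : (0:ℝ) ≤ 1/(b*β) := by positivity
    simp_rw [ENNReal.ofReal_mul hinv]
    rw [lintegral_const_mul' _ _ ofReal_ne_top]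
    apply le_trans (mul_le_mul_right (lint_exp_Ioc hβ hb1) _)
    rw [← ENNReal.ofReal_mul hinv]
    apply ENNReal.ofReal_le_ofReal
    have h2 : 1/(b*β) ≤ 1 := by
      rw [div_le_one (by positivity)]
      nlinarith
    nlinarith [exp_neg_half_le_one (by nlinarith : (0:ℝ) ≤ β*b)]
  · -- small case : β*b < 1
    set c := min 1 (1/β) with hc
    have hc0 : 0 < c := lt_min one_pos (by positivity)
    have hbc : b ≤ c := le_min hb1 (by rw [le_div_iff₀ hβ]; nlinarith)
    have hc1 : c ≤ 1 := min_le_left _ _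
    have hcβ : β * c ≤ 1 := by
      have h := min_le_right 1 (1/β)
      rw [← hc] at h
      rw [mul_comm, ← le_div_iff₀ hβ]
      exact h
    have hsplit : Ioc b 1 = Ioc b c ∪ Ioc c 1 := (Ioc_union_Ioc_eq_Ioc hbc hc1).symm
    rw [hsplit]
    apply le_trans (lintegral_union_le _ _ _)
    have pieceA : ∫⁻ u in Ioc b c, ENNReal.ofReal ((1/u) * (mlog (β*u))^m * Real.exp (-(β*u)/2))
        ≤ ENNReal.ofReal ((mlog (β*b))^(m+1)) := by
      have hmono : ∀ u ∈ Ioc b c, ENNReal.ofReal ((1/u) * (mlog (β*u))^m * Real.exp (-(β*u)/2))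
          ≤ ENNReal.ofReal ((1/u) * (1 - Real.log (β*u))^m) := by
        intro u hu
        apply ENNReal.ofReal_le_ofReal
        have hu0 : 0 < u := lt_trans hb0 hu.1
        have hβu0 : 0 < β*u := by positivity
        have hβu1 : β*u ≤ 1 := le_trans (by nlinarith [hu.2]) hcβ
        rw [mlog_of_le_one hβu0 hβu1]
        have h1 : (0:ℝ) ≤ (1/u) * (1 - Real.log (β*u))^m := by
          apply mul_nonneg (by positivity)
          apply pow_nonneg
          nlinarith [Real.log_nonpos hβu0.le hβu1]
        calc (1/u) * (1 - Real.log (β*u))^m * Real.exp (-(β*u)/2)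
            ≤ (1/u) * (1 - Real.log (β*u))^m * 1 := by
              apply mul_le_mul_of_nonneg_left (exp_neg_half_le_one hβu0.le) h1
          _ = (1/u) * (1 - Real.log (β*u))^m := by ring
      apply le_trans (setLIntegral_mono' measurableSet_Ioc hmono)
      apply le_trans (lint_mpow_Ioc m hβ hb0 hbc hcβ)
      apply ENNReal.ofReal_le_ofReal
      rw [← mlog_of_le_one (by positivity) hcase.le]
      apply div_le_self (pow_nonneg (mlog_nonneg _) _)
      have : (0:ℝ) ≤ (m:ℝ) := Nat.cast_nonneg m
      linarith
    have pieceB : ∫⁻ u in Ioc c 1, ENNReal.ofReal ((1/u) * (mlog (β*u))^m * Real.exp (-(β*u)/2))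
        ≤ ENNReal.ofReal 2 := by
      have hmono : ∀ u ∈ Ioc c 1, ENNReal.ofReal ((1/u) * (mlog (β*u))^m * Real.exp (-(β*u)/2))
          ≤ ENNReal.ofReal (β * Real.exp (-(β*u)/2)) := by
        intro u hu
        apply ENNReal.ofReal_le_ofReal
        rcases le_or_gt 1 (1/β) with hβ1 | hβ1
        · exfalso
          have : c = 1 := by rw [hc, min_eq_left hβ1]
          rw [this] at hu
          linarith [hu.1, hu.2]
        · have hceq : c = 1/β := by rw [hc, min_eq_right hβ1.le]
          have hu1β : 1/β < u := by rw [← hceq]; exact hu.1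
          have hu0 : 0 < u := lt_trans (by positivity) hu1β
          have hβu : 1 ≤ β*u := by
            rw [div_lt_iff₀ hβ] at hu1β
            nlinarith
          rw [mlog_of_one_le hβu, one_pow, mul_one]
          apply mul_le_mul_of_nonneg_right _ (Real.exp_pos _).le
          rw [div_le_iff₀ hu0]
          nlinarith
      apply le_trans (setLIntegral_mono' measurableSet_Ioc hmono)
      apply le_trans (lint_exp_Ioc hβ hc1)
      apply ENNReal.ofReal_le_ofReal
      nlinarith [exp_neg_half_le_one (by positivity : (0:ℝ) ≤ β*c)]
    apply le_trans (add_le_add pieceA pieceB)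
    rw [← ENNReal.ofReal_add (pow_nonneg (mlog_nonneg _) _) (by norm_num)]
    apply ENNReal.ofReal_le_ofReal
    have hE : (1:ℝ)/2 ≤ Real.exp (-(β*b)/2) := by
      nlinarith [Real.add_one_le_exp (-(β*b)/2)]
    nlinarith [mul_le_mul_of_nonneg_left hE
      (by positivity : (0:ℝ) ≤ 8 * (mlog (β*b))^(m+1))]

lemma mem_cube_iff {d : ℕ} {y : Fin d → ℝ} : y ∈ cube d ↔ ∀ j, 0 ≤ y j ∧ y j ≤ 1 := by
  simp [cube, Set.mem_Icc, Pi.le_def, forall_and]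

lemma measurable_expJ {d : ℕ} (t : ℝ) (y : Fin d → ℝ) :
    Measurable (fun x : Fin d → ℝ => ENNReal.ofReal (Real.exp (-(t * pvol (x ⊔ y))))) := by
  apply ENNReal.measurable_ofReal.comp
  apply Real.continuous_exp.measurable.comp
  apply Measurable.neg
  apply Measurable.const_mul
  apply measurable_pvol.comp
  exact measurable_pi_lambda _ (fun j => (measurable_pi_apply j).sup measurable_const)

lemma claimA_s8 (d : ℕ) : ∃ C : ℝ, 0 < C ∧ ∀ t : ℝ, 0 < t → ∀ y ∈ cube d, 0 < pvol y →
    ENNReal.ofReal t * ∫⁻ x in cube d, ENNReal.ofReal (Real.exp (-(t * pvol (x ⊔ y))))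
      ≤ ENNReal.ofReal (C * (mlog (t * pvol y))^d * Real.exp (-(t * pvol y)/2)) := by
  induction d with
  | zero =>
    refine ⟨1, one_pos, fun t ht y hy hpy => ?_⟩
    have hpy1 : pvol y = 1 := by simp [pvol]
    have hpx : ∀ x : Fin 0 → ℝ, pvol (x ⊔ y) = 1 := fun x => by simp [pvol]
    simp_rw [hpx, hpy1]
    rw [setLIntegral_const]
    have hvol : (volume : Measure (Fin 0 → ℝ)) (cube 0) = 1 := by
      rw [cube_zero, volume_pi, Measure.pi_univ]
      simp
    rw [hvol, mul_one, ← ENNReal.ofReal_mul ht.le]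
    apply ENNReal.ofReal_le_ofReal
    rw [pow_zero]
    have h1 : t/4 + 1 ≤ Real.exp (t/4) := by linarith [Real.add_one_le_exp (t/4)]
    have h2 : Real.exp (t/4) * Real.exp (t/4) = Real.exp (t/2) := by
      rw [← Real.exp_add]; ring_nf
    have h3 : t ≤ Real.exp (t/2) := by
      have h25 := mul_le_mul h1 h1 (by positivity) (Real.exp_pos _).le
      nlinarith [sq_nonneg (t/4 - 1)]
    have h5 := mul_le_mul_of_nonneg_right h3 (Real.exp_pos (-(t*1))).le
    have h6 : Real.exp (t/2) * Real.exp (-(t*1)) = Real.exp (-(t*1)/2) := by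
      rw [← Real.exp_add]; congr 1; ring
    rw [h6] at h5
    linarith
  | succ d IH =>
    obtain ⟨C, hC, hIH⟩ := IH
    refine ⟨9*C, by positivity, fun t ht y hy hpy => ?_⟩
    set b := y 0 with hbdef
    set y' := Fin.tail y with hy'def
    have hcoord : ∀ j, 0 < y j := by
      intro j
      rcases lt_or_eq_of_le ((mem_cube_iff.1 hy) j).1 with h | h
      · exact h
      · exfalso
        have : pvol y = 0 := by
          unfold pvol; exact Finset.prod_eq_zero (Finset.mem_univ j) h.symm
        linarith
    have hb0 : 0 < b := hcoord 0
    have hb1 : b ≤ 1 := ((mem_cube_iff.1 hy) 0).2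
    have hw : 0 < pvol y' := by
      unfold pvol
      exact Finset.prod_pos (fun j _ => hcoord j.succ)
    have hy' : y' ∈ cube d :=
      mem_cube_iff.2 (fun j => ⟨((mem_cube_iff.1 hy) j.succ).1, ((mem_cube_iff.1 hy) j.succ).2⟩)
    set w := pvol y' with hwdef
    have hpv : pvol y = b * w := by
      rw [hwdef, hy'def, show pvol y = ∏ j, y j from rfl, Fin.prod_univ_succ]
      rfl
    have hcons : ∀ (u:ℝ) (x : Fin d → ℝ), (Fin.cons u x) ⊔ y = Fin.cons (max u b) (x ⊔ y') := by
      intro u x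
      funext j
      refine Fin.cases ?_ ?_ j
      · simp [Pi.sup_apply, hbdef]
      · intro i
        simp [Pi.sup_apply, Fin.cons_succ, hy'def, Fin.tail]
    rw [lintegral_cube_succ _ (measurable_expJ t y)]
    simp_rw [hcons, pvol_cons]
    rw [← lintegral_const_mul' _ _ ENNReal.ofReal_ne_top]
    have hpoint : ∀ u ∈ Set.Icc (0:ℝ) 1,
        ENNReal.ofReal t * ∫⁻ x in cube d, ENNReal.ofReal (Real.exp (-(t * (max u b * pvol (x ⊔ y')))))
          ≤ ENNReal.ofReal ((1/(max u b)) *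
              (C * (mlog (t * max u b * w))^d * Real.exp (-(t * max u b * w)/2))) := by
      intro u hu
      have hm0 : 0 < max u b := lt_of_lt_of_le hb0 (le_max_right u b)
      have hinner : ∀ x : Fin d → ℝ, t * (max u b * pvol (x ⊔ y')) = (t * max u b) * pvol (x ⊔ y') :=
        fun x => by ring
      simp_rw [hinner]
      have hsplit : ENNReal.ofReal t = ENNReal.ofReal (1/(max u b)) * ENNReal.ofReal (t * max u b) := by
        rw [← ENNReal.ofReal_mul (by positivity)]
        congr 1
        field_simp
      rw [hsplit, mul_assoc]
      have hIH2 := hIH (t * max u b) (by positivity) y' hy' hw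
      apply le_trans (mul_le_mul_right hIH2 _)
      exact le_of_eq (ENNReal.ofReal_mul (by positivity)).symm
    apply le_trans (setLIntegral_mono' measurableSet_Icc hpoint)
    rw [← Set.Icc_union_Ioc_eq_Icc hb0.le hb1]
    apply le_trans (lintegral_union_le _ _ _)
    have hpiece1 : ∫⁻ u in Set.Icc 0 b, ENNReal.ofReal ((1/(max u b)) *
          (C * (mlog (t * max u b * w))^d * Real.exp (-(t * max u b * w)/2)))
        ≤ ENNReal.ofReal (C * (mlog (t * pvol y))^d * Real.exp (-(t * pvol y)/2)) := by
      rw [setLIntegral_congr_fun measurableSet_Icc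
        (fun u (hu : u ∈ Set.Icc 0 b) => by rw [max_eq_right hu.2])]
      rw [setLIntegral_const, Real.volume_Icc, ← ENNReal.ofReal_mul
        (mul_nonneg (one_div_pos.2 hb0).le (mul_nonneg (mul_nonneg hC.le
          (pow_nonneg (mlog_nonneg _) _)) (Real.exp_pos _).le))]
      apply ENNReal.ofReal_le_ofReal
      rw [hpv]
      rw [show t * (b * w) = t * b * w by ring]
      apply le_of_eq
      field_simp
      ring
    have hpiece2 : ∫⁻ u in Set.Ioc b 1, ENNReal.ofReal ((1/(max u b)) *
          (C * (mlog (t * max u b * w))^d * Real.exp (-(t * max u b * w)/2)))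
        ≤ ENNReal.ofReal (C * (8 * (mlog (t * pvol y))^(d+1) * Real.exp (-(t * pvol y)/2))) := by
      rw [setLIntegral_congr_fun measurableSet_Ioc
        (fun u (hu : u ∈ Set.Ioc b 1) => by rw [max_eq_left hu.1.le])]
      have hcong : ∀ u ∈ Set.Ioc b 1,
          ENNReal.ofReal ((1/u) * (C * (mlog (t * u * w))^d * Real.exp (-(t * u * w)/2)))
            = ENNReal.ofReal (C * ((1/u) * (mlog ((t*w) * u))^d * Real.exp (-((t*w) * u)/2))) := by
        intro u hu
        congr 1
        rw [show t * u * w = (t*w) * u by ring]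
        ring
      rw [setLIntegral_congr_fun measurableSet_Ioc hcong]
      have hmul : ∀ u : ℝ, ENNReal.ofReal (C * ((1/u) * (mlog ((t*w) * u))^d * Real.exp (-((t*w) * u)/2)))
          = ENNReal.ofReal C * ENNReal.ofReal ((1/u) * (mlog ((t*w) * u))^d * Real.exp (-((t*w) * u)/2)) :=
        fun u => ENNReal.ofReal_mul hC.le
      simp_rw [hmul]
      rw [lintegral_const_mul' _ _ ENNReal.ofReal_ne_top]
      apply le_trans (mul_le_mul_right (lint_T3 d (by positivity : 0 < t*w) hb0 hb1) _)
      rw [← ENNReal.ofReal_mul hC.le]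
      apply ENNReal.ofReal_le_ofReal
      rw [hpv, show t * w * b = t * (b * w) by ring]
    apply le_trans (add_le_add hpiece1 hpiece2)
    rw [← ENNReal.ofReal_add
      (mul_nonneg (mul_nonneg hC.le (pow_nonneg (mlog_nonneg _) _)) (Real.exp_pos _).le)
      (mul_nonneg hC.le (mul_nonneg (mul_nonneg (by norm_num)
        (pow_nonneg (mlog_nonneg _) _)) (Real.exp_pos _).le))]
    apply ENNReal.ofReal_le_ofReal
    have hXX : mlog (t * pvol y) ^ d ≤ mlog (t * pvol y) ^ (d+1) :=
      pow_le_pow_right₀ (one_le_mlog _) (Nat.le_succ d)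
    have hE : (0:ℝ) ≤ Real.exp (-(t * pvol y)/2) := (Real.exp_pos _).le
    nlinarith [mul_le_mul_of_nonneg_left hXX (by positivity : (0:ℝ) ≤ C * Real.exp (-(t * pvol y)/2))]

lemma measurable_mlog : Measurable mlog := by
  unfold mlog
  exact measurable_const.add (measurable_const.max Real.measurable_log.neg)

lemma measurable_hfun_ofReal {d : ℕ} (k : ℕ) (t : ℝ) :
    Measurable (fun y : Fin d → ℝ => ENNReal.ofReal (hfun k (t * pvol y))) := by
  apply ENNReal.measurable_ofReal.comp
  have h1 : Measurable (fun v : ℝ => hfun k v) := by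
    unfold hfun
    exact (measurable_mlog.pow_const k).mul
      (Real.continuous_exp.measurable.comp (measurable_id.neg.div_const 2))
  exact h1.comp (measurable_pvol.const_mul t)

lemma volume_cube_zero : (volume : Measure (Fin 0 → ℝ)) (cube 0) = 1 := by
  rw [cube_zero, volume_pi, Measure.pi_univ]
  simp

lemma psi_succ (d k : ℕ) (t : ℝ) :
    ∫⁻ y in cube (d+1), ENNReal.ofReal (hfun k (t * pvol y))
      = ∫⁻ u in Icc (0:ℝ) 1, ∫⁻ y in cube d, ENNReal.ofReal (hfun k ((t*u) * pvol y)) := by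
  rw [lintegral_cube_succ _ (measurable_hfun_ofReal k t)]
  simp_rw [pvol_cons, show ∀ (u p:ℝ), t * (u*p) = (t*u)*p from fun u p => by ring]

lemma ae_pos_Icc : ∀ᵐ u : ℝ ∂volume, u ∈ Icc (0:ℝ) 1 → 0 < u := by
  have h0 : ({0} : Set ℝ) =ᵐ[volume] (∅ : Set ℝ) := by
    refine ae_eq_empty.2 ?_
    exact measure_singleton 0
  rw [ae_iff]
  have hsub : {u : ℝ | ¬ (u ∈ Icc (0:ℝ) 1 → 0 < u)} ⊆ {(0:ℝ)} := by
    intro u hu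
    simp only [Set.mem_setOf_eq, _root_.not_imp] at hu
    have := hu.1.1
    have := hu.2
    simp only [Set.mem_singleton_iff]
    linarith
  exact measure_mono_null hsub (measure_singleton 0)

lemma claimB1 (k : ℕ) (d : ℕ) : ∃ C : ℝ, 0 < C ∧ ∀ t : ℝ, 0 < t →
    ENNReal.ofReal t * ∫⁻ y in cube d, ENNReal.ofReal (hfun k (t * pvol y))
      ≤ ENNReal.ofReal (C * Real.sqrt t) := by
  induction d with
  | zero =>
    refine ⟨(1+2*(k:ℝ))^k, by positivity, fun t ht => ?_⟩
    have hsq : 0 < Real.sqrt t := Real.sqrt_pos.2 ht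
    simp_rw [show ∀ y : Fin 0 → ℝ, pvol y = 1 from fun y => by simp [pvol], mul_one]
    rw [setLIntegral_const, volume_cube_zero, mul_one, ← ENNReal.ofReal_mul ht.le]
    apply ENNReal.ofReal_le_ofReal
    calc t * hfun k t ≤ t * ((1+2*(k:ℝ))^k * (Real.sqrt t)⁻¹) :=
          mul_le_mul_of_nonneg_left (hfun_le_inv_sqrt k ht) ht.le
      _ = (1+2*(k:ℝ))^k * Real.sqrt t := by
          have h2 : Real.sqrt t * Real.sqrt t = t := Real.mul_self_sqrt ht.le
          field_simp
          linear_combination (-1:ℝ) * h2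
  | succ d IH =>
    obtain ⟨C, hC, hB⟩ := IH
    refine ⟨2*C, by positivity, fun t ht => ?_⟩
    have hsqt : 0 < Real.sqrt t := Real.sqrt_pos.2 ht
    rw [psi_succ, ← lintegral_const_mul' _ _ ENNReal.ofReal_ne_top]
    have hpoint : ∀ᵐ u : ℝ ∂volume, u ∈ Icc (0:ℝ) 1 →
        ENNReal.ofReal t * ∫⁻ y in cube d, ENNReal.ofReal (hfun k ((t*u) * pvol y))
          ≤ ENNReal.ofReal (C * Real.sqrt t * (Real.sqrt u)⁻¹) := by
      filter_upwards [ae_pos_Icc] with u hu hmem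
      have hu0 : 0 < u := hu hmem
      have hsqu : 0 < Real.sqrt u := Real.sqrt_pos.2 hu0
      have hsplit : ENNReal.ofReal t = ENNReal.ofReal (1/u) * ENNReal.ofReal (t*u) := by
        rw [← ENNReal.ofReal_mul (by positivity)]
        congr 1
        field_simp
      rw [hsplit, mul_assoc]
      apply le_trans (mul_le_mul_right (hB (t*u) (by positivity)) _)
      rw [← ENNReal.ofReal_mul (by positivity)]
      apply ENNReal.ofReal_le_ofReal
      have h2 : Real.sqrt u * Real.sqrt u = u := Real.mul_self_sqrt hu0.le
      have h3 : (1:ℝ)/u * Real.sqrt u = (Real.sqrt u)⁻¹ := by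
        field_simp
        exact Real.sq_sqrt hu0.le
      rw [Real.sqrt_mul ht.le]
      apply le_of_eq
      rw [← h3]
      ring
    apply le_trans (setLIntegral_mono_ae' measurableSet_Icc hpoint)
    rw [setLIntegral_congr (Ioc_ae_eq_Icc (α := ℝ) (μ := volume)).symm]
    simp_rw [ENNReal.ofReal_mul (by positivity : (0:ℝ) ≤ C * Real.sqrt t)]
    rw [lintegral_const_mul' _ _ ENNReal.ofReal_ne_top]
    apply le_trans (mul_le_mul_right (lint_inv_sqrt_Ioc one_pos) _)
    rw [← ENNReal.ofReal_mul (by positivity)]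
    apply ENNReal.ofReal_le_ofReal
    rw [Real.sqrt_one]
    nlinarith

lemma hfun_of_one_le {k : ℕ} {v : ℝ} (hv : 1 ≤ v) : hfun k v = Real.exp (-v/2) := by
  unfold hfun
  rw [mlog_of_one_le hv, one_pow, one_mul]

lemma lint_scaled_inv_sqrt {c A : ℝ} (hc0 : 0 < c) (hA : 0 ≤ A) (f : ℝ → ℝ≥0∞)
    (hpoint : ∀ᵐ u : ℝ ∂volume, u ∈ Icc (0:ℝ) c → f u ≤ ENNReal.ofReal (A * (Real.sqrt u)⁻¹)) :
    ∫⁻ u in Icc 0 c, f u ≤ ENNReal.ofReal (2 * A * Real.sqrt c) := by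
  apply le_trans (setLIntegral_mono_ae' measurableSet_Icc hpoint)
  rw [setLIntegral_congr (Ioc_ae_eq_Icc (α := ℝ) (μ := volume)).symm]
  simp_rw [ENNReal.ofReal_mul hA]
  rw [lintegral_const_mul' _ _ ENNReal.ofReal_ne_top]
  apply le_trans (mul_le_mul_right (lint_inv_sqrt_Ioc hc0) _)
  rw [← ENNReal.ofReal_mul hA]
  exact ENNReal.ofReal_le_ofReal (le_of_eq (by ring))

lemma sqrt_t_mul_sqrt_inv {t : ℝ} (ht : 0 < t) : Real.sqrt t * Real.sqrt (1/t) = 1 := by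
  rw [one_div, Real.sqrt_inv]
  field_simp

lemma ae_ne_zero : ∀ᵐ u : ℝ ∂volume, u ≠ (0:ℝ) := by
  rw [ae_iff]
  have h : {u : ℝ | ¬ u ≠ 0} = {0} := by ext u; simp
  rw [h]
  exact measure_singleton 0

lemma t_mul_inv_sqrt {t : ℝ} (ht : 0 < t) : t * (Real.sqrt t)⁻¹ = Real.sqrt t := by
  have h2 : Real.sqrt t * Real.sqrt t = t := Real.mul_self_sqrt ht.le
  have hsqt : 0 < Real.sqrt t := Real.sqrt_pos.2 ht
  field_simp
  nlinarith [h2, Real.sq_sqrt ht.le]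

lemma claimB2 (k : ℕ) (e : ℕ) : ∃ C : ℝ, 0 < C ∧ ∀ t : ℝ, 1 ≤ t →
    ENNReal.ofReal t * ∫⁻ y in cube (e+1), ENNReal.ofReal (hfun k (t * pvol y))
      ≤ ENNReal.ofReal (C * (1 + Real.log t)^e) := by
  induction e with
  | zero =>
    set K := (1+2*(k:ℝ))^k with hK
    have hK0 : (0:ℝ) < K := by positivity
    refine ⟨2*K + 2, by positivity, fun t ht => ?_⟩
    have ht0 : 0 < t := lt_of_lt_of_le one_pos ht
    have h1t : (0:ℝ) ≤ 1/t := by positivity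
    have h1t0 : (0:ℝ) < 1/t := by positivity
    have ht1 : 1/t ≤ 1 := by rw [div_le_one ht0]; exact ht
    have hsqt : 0 < Real.sqrt t := Real.sqrt_pos.2 ht0
    rw [psi_succ, ← lintegral_const_mul' _ _ ENNReal.ofReal_ne_top]
    simp_rw [show ∀ y : Fin 0 → ℝ, pvol y = 1 from fun y => by simp [pvol], mul_one,
      setLIntegral_const, volume_cube_zero, mul_one]
    rw [← Set.Icc_union_Ioc_eq_Icc h1t ht1]
    apply le_trans (lintegral_union_le _ _ _)
    have piece1 : ∫⁻ u in Icc 0 (1/t), ENNReal.ofReal t * ENNReal.ofReal (hfun k (t*u))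
        ≤ ENNReal.ofReal (2 * (K * Real.sqrt t) * Real.sqrt (1/t)) := by
      apply lint_scaled_inv_sqrt h1t0 (by positivity)
      filter_upwards [ae_ne_zero] with u hne hmem
      have hu0 : 0 < u := lt_of_le_of_ne hmem.1 (Ne.symm hne)
      have hsqu : 0 < Real.sqrt u := Real.sqrt_pos.2 hu0
      rw [← ENNReal.ofReal_mul ht0.le]
      apply ENNReal.ofReal_le_ofReal
      calc t * hfun k (t*u) ≤ t * (K * (Real.sqrt (t*u))⁻¹) :=
            mul_le_mul_of_nonneg_left (hfun_le_inv_sqrt k (by positivity)) ht0.le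
        _ = (K * (Real.sqrt u)⁻¹) * (t * (Real.sqrt t)⁻¹) := by
            rw [Real.sqrt_mul ht0.le, mul_inv]
            ring
        _ = K * Real.sqrt t * (Real.sqrt u)⁻¹ := by
            rw [t_mul_inv_sqrt ht0]
            ring
    have piece2 : ∫⁻ u in Ioc (1/t) 1, ENNReal.ofReal t * ENNReal.ofReal (hfun k (t*u))
        ≤ ENNReal.ofReal 2 := by
      have hpoint : ∀ u ∈ Ioc (1/t) 1, ENNReal.ofReal t * ENNReal.ofReal (hfun k (t*u))
          ≤ ENNReal.ofReal (t * Real.exp (-(t*u)/2)) := by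
        intro u hu
        have htu : 1 ≤ t*u := by
          have := hu.1
          rw [div_lt_iff₀ ht0] at this
          nlinarith
        rw [← ENNReal.ofReal_mul ht0.le, hfun_of_one_le htu]
      apply le_trans (setLIntegral_mono' measurableSet_Ioc hpoint)
      apply le_trans (lint_exp_Ioc ht0 ht1)
      apply ENNReal.ofReal_le_ofReal
      have he1 : t * (1/t) = 1 := by field_simp
      rw [he1]
      nlinarith [exp_neg_half_le_one (le_of_lt one_pos)]
    apply le_trans (add_le_add piece1 piece2)
    rw [← ENNReal.ofReal_add (by positivity) (by norm_num)]
    apply ENNReal.ofReal_le_ofReal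
    rw [pow_zero, mul_one]
    have hs : 2 * (K * Real.sqrt t) * Real.sqrt (1/t) = 2*K := by
      rw [show 2 * (K * Real.sqrt t) * Real.sqrt (1/t)
          = 2 * K * (Real.sqrt t * Real.sqrt (1/t)) by ring, sqrt_t_mul_sqrt_inv ht0]
      ring
    rw [hs]
  | succ e IH =>
    obtain ⟨C2, hC2, hQ⟩ := IH
    obtain ⟨C1, hC1, hB⟩ := claimB1 k (e+1)
    refine ⟨2*C1 + C2, by positivity, fun t ht => ?_⟩
    have ht0 : 0 < t := lt_of_lt_of_le one_pos ht
    have h1t : (0:ℝ) ≤ 1/t := by positivity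
    have h1t0 : (0:ℝ) < 1/t := by positivity
    have ht1 : 1/t ≤ 1 := by rw [div_le_one ht0]; exact ht
    have hsqt : 0 < Real.sqrt t := Real.sqrt_pos.2 ht0
    have hlog : (1:ℝ) ≤ (1 + Real.log t)^(e+1) :=
      one_le_pow₀ (by nlinarith [Real.log_nonneg ht])
    rw [psi_succ, ← lintegral_const_mul' _ _ ENNReal.ofReal_ne_top]
    rw [← Set.Icc_union_Ioc_eq_Icc h1t ht1]
    apply le_trans (lintegral_union_le _ _ _)
    have piece1 : ∫⁻ u in Icc 0 (1/t),
        ENNReal.ofReal t * ∫⁻ y in cube (e+1), ENNReal.ofReal (hfun k ((t*u) * pvol y))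
          ≤ ENNReal.ofReal (2 * (C1 * Real.sqrt t) * Real.sqrt (1/t)) := by
      apply lint_scaled_inv_sqrt h1t0 (by positivity)
      filter_upwards [ae_ne_zero] with u hne hmem
      have hu0 : 0 < u := lt_of_le_of_ne hmem.1 (Ne.symm hne)
      have hsqu : 0 < Real.sqrt u := Real.sqrt_pos.2 hu0
      have hsplit : ENNReal.ofReal t = ENNReal.ofReal (1/u) * ENNReal.ofReal (t*u) := by
        rw [← ENNReal.ofReal_mul (by positivity)]
        congr 1
        field_simp
      rw [hsplit, mul_assoc]
      apply le_trans (mul_le_mul_right (hB (t*u) (by positivity)) _)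
      rw [← ENNReal.ofReal_mul (by positivity)]
      apply ENNReal.ofReal_le_ofReal
      have h3 : (1:ℝ)/u * Real.sqrt u = (Real.sqrt u)⁻¹ := by
        field_simp
        exact Real.sq_sqrt hu0.le
      rw [Real.sqrt_mul ht0.le]
      apply le_of_eq
      rw [← h3]
      ring
    have piece2 : ∫⁻ u in Ioc (1/t) 1,
        ENNReal.ofReal t * ∫⁻ y in cube (e+1), ENNReal.ofReal (hfun k ((t*u) * pvol y))
          ≤ ENNReal.ofReal C2 * ENNReal.ofReal ((1 + Real.log t)^(e+1)) := by
      have hpoint : ∀ u ∈ Ioc (1/t) 1,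
          ENNReal.ofReal t * ∫⁻ y in cube (e+1), ENNReal.ofReal (hfun k ((t*u) * pvol y))
            ≤ ENNReal.ofReal (C2 * ((1/u) * (1 + Real.log (t*u))^e)) := by
        intro u hu
        have hu0 : 0 < u := lt_trans h1t0 hu.1
        have htu : 1 ≤ t*u := by
          have := hu.1
          rw [div_lt_iff₀ ht0] at this
          nlinarith
        have hsplit : ENNReal.ofReal t = ENNReal.ofReal (1/u) * ENNReal.ofReal (t*u) := by
          rw [← ENNReal.ofReal_mul (by positivity)]
          congr 1
          field_simp
        rw [hsplit, mul_assoc]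
        apply le_trans (mul_le_mul_right (hQ (t*u) htu) _)
        rw [← ENNReal.ofReal_mul (by positivity)]
        apply ENNReal.ofReal_le_ofReal
        apply le_of_eq
        ring
      apply le_trans (setLIntegral_mono' measurableSet_Ioc hpoint)
      have hmul : ∀ u : ℝ, ENNReal.ofReal (C2 * ((1/u) * (1 + Real.log (t*u))^e))
          = ENNReal.ofReal C2 * ENNReal.ofReal ((1/u) * (1 + Real.log (t*u))^e) :=
        fun u => ENNReal.ofReal_mul hC2.le
      simp_rw [hmul]
      rw [lintegral_const_mul' _ _ ENNReal.ofReal_ne_top]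
      exact mul_le_mul_right (lint_logpow_Ioc e ht) _
    apply le_trans (add_le_add piece1 piece2)
    rw [← ENNReal.ofReal_mul hC2.le]
    rw [← ENNReal.ofReal_add (by positivity) (by positivity)]
    apply ENNReal.ofReal_le_ofReal
    have hs : 2 * (C1 * Real.sqrt t) * Real.sqrt (1/t) = 2*C1 := by
      rw [show 2 * (C1 * Real.sqrt t) * Real.sqrt (1/t)
          = 2 * C1 * (Real.sqrt t * Real.sqrt (1/t)) by ring, sqrt_t_mul_sqrt_inv ht0]
      ring
    rw [hs]
    nlinarith [hlog, hC1, hC2]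


lemma measurable_hfun_real {d : ℕ} (k : ℕ) (t : ℝ) :
    Measurable (fun y : Fin d → ℝ => hfun k (t * pvol y)) := by
  have h1 : Measurable (fun v : ℝ => hfun k v) := by
    unfold hfun
    exact (measurable_mlog.pow_const k).mul
      (Real.continuous_exp.measurable.comp (measurable_id.neg.div_const 2))
  exact h1.comp (measurable_pvol.const_mul t)

lemma measurable_expR {d : ℕ} (t : ℝ) (y : Fin d → ℝ) :
    Measurable (fun x : Fin d → ℝ => Real.exp (-(t * pvol (x ⊔ y)))) := by
  apply Real.continuous_exp.measurable.comp
  apply Measurable.neg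
  apply Measurable.const_mul
  apply measurable_pvol.comp
  exact measurable_pi_lambda _ (fun j => (measurable_pi_apply j).sup measurable_const)

lemma ae_pvol_pos (d : ℕ) : ∀ᵐ y ∂(volume.restrict (cube d)), 0 < pvol y := by
  rw [ae_restrict_iff' measurableSet_cube, ae_iff]
  have hnull : volume (⋃ j : Fin d,
      Set.pi Set.univ (fun l => if l = j then ({0}:Set ℝ) else Icc 0 1)) = 0 := by
    apply measure_iUnion_null
    intro j
    rw [volume_pi_pi]
    apply Finset.prod_eq_zero (Finset.mem_univ j)
    simp
  refine measure_mono_null ?_ hnull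
  · intro y hy
    rw [Set.mem_setOf_eq, _root_.not_imp] at hy
    have hnn : 0 ≤ pvol y := Finset.prod_nonneg (fun j _ => (mem_cube_iff.1 hy.1 j).1)
    have h0 : pvol y = 0 := le_antisymm (not_lt.1 hy.2) hnn
    obtain ⟨j, _, hj⟩ := Finset.prod_eq_zero_iff.1 h0
    apply Set.mem_iUnion.2 ⟨j, ?_⟩
    rw [Set.mem_pi]
    intro l _
    by_cases hl : l = j
    · subst hl; simp [hj]
    · simp only [hl, if_false]
      exact Set.mem_Icc.2 ⟨(mem_cube_iff.1 hy.1 l).1, (mem_cube_iff.1 hy.1 l).2⟩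

/-- For every `d, i ∈ ℕ` and `α > 0` there is `C > 0` depending only on `d`, `i`, `α`
with `s ∫_{[0,1]^d} (s ∫_{[0,1]^d} e^{-α s |x ∨ y|} dx)^i dy ≤ C (1 + log s)^{d-1}`
for all `s ≥ 1`. -/
theorem stmt8 (d : ℕ) (hd : 1 ≤ d) (i : ℕ) (hi : 1 ≤ i) (α : ℝ) (hα : 0 < α) :
    ∃ C : ℝ, 0 < C ∧ ∀ s : ℝ, 1 ≤ s →
      s * ∫ y in cube d,
          (s * ∫ x in cube d, Real.exp (-(α * s * pvol (x ⊔ y)))) ^ i ≤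
        C * (1 + Real.log s) ^ (d - 1) := by
  obtain ⟨CA, hCA, hA⟩ := claimA_s8 d
  obtain ⟨CB1, hCB1, hB1⟩ := claimB1 (i*d) d
  obtain ⟨CB, hCB, hQ⟩ := claimB2 (i*d) (d-1)
  have hd1 : d - 1 + 1 = d := Nat.sub_add_cancel hd
  rw [hd1] at hQ
  set Dα : ℝ := (1 + max 0 (Real.log α))^(d-1) with hDα
  have hDα0 : 0 < Dα := by positivity
  set D : ℝ := CB1 + CB * Dα with hD
  have hD0 : 0 < D := by positivity
  set c0 : ℝ := (CA/α)^i with hc0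
  have hc00 : 0 < c0 := by positivity
  refine ⟨(c0 * D)/α, by positivity, fun s hs => ?_⟩
  have hs0 : 0 < s := lt_of_lt_of_le one_pos hs
  set t : ℝ := α * s with htdef
  have ht0 : 0 < t := by positivity
  set k : ℕ := i * d with hk
  set P : ℝ := (1 + Real.log s)^(d-1) with hP
  have hlogs : 0 ≤ Real.log s := Real.log_nonneg hs
  have hP1 : 1 ≤ P := one_le_pow₀ (by linarith)
  set Ψ : ℝ≥0∞ := ∫⁻ y in cube d, ENNReal.ofReal (hfun k (t * pvol y)) with hΨ
  -- bound on Ψ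
  have hψ : ENNReal.ofReal t * Ψ ≤ ENNReal.ofReal (D * P) := by
    rcases le_or_gt 1 t with hcase | hcase
    · apply le_trans (hQ t hcase)
      apply ENNReal.ofReal_le_ofReal
      have hlt : 1 + Real.log t = 1 + Real.log α + Real.log s := by
        rw [htdef, Real.log_mul (ne_of_gt hα) (ne_of_gt hs0)]
        ring
      have h2 : 1 + Real.log t ≤ (1 + max 0 (Real.log α)) * (1 + Real.log s) := by
        rw [hlt]
        nlinarith [le_max_left 0 (Real.log α), le_max_right 0 (Real.log α)]
      have h3 : (1 + Real.log t)^(d-1) ≤ Dα * P := by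
        rw [hDα, hP, ← mul_pow]
        exact pow_le_pow_left₀ (by nlinarith [Real.log_nonneg hcase]) h2 (d-1)
      rw [hD]
      nlinarith [mul_le_mul_of_nonneg_left h3 hCB.le]
    · apply le_trans (hB1 t ht0)
      apply ENNReal.ofReal_le_ofReal
      have h2 : Real.sqrt t ≤ 1 := Real.sqrt_le_one.2 hcase.le
      rw [hD]
      nlinarith [Real.sqrt_nonneg t]
  have hψfin : ENNReal.ofReal t * Ψ ≠ ⊤ := ne_top_of_le_ne_top ENNReal.ofReal_ne_top hψ
  have hΨfin : Ψ ≠ ⊤ := by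
    intro htop
    rw [htop, ENNReal.mul_top (by simpa using (ENNReal.ofReal_pos.2 ht0).ne')] at hψfin
    exact hψfin rfl
  have hψreal : t * Ψ.toReal ≤ D * P := by
    have h1 := (ENNReal.toReal_le_toReal hψfin ENNReal.ofReal_ne_top).2 hψ
    rwa [ENNReal.toReal_mul, ENNReal.toReal_ofReal ht0.le,
      ENNReal.toReal_ofReal (by positivity)] at h1
  -- G and its integral
  set G : (Fin d → ℝ) → ℝ := fun y => c0 * hfun k (t * pvol y) with hG
  have hGmeas : Measurable G := (measurable_hfun_real k t).const_mul c0
  have hGnn : ∀ y, 0 ≤ G y := fun y => mul_nonneg hc00.le (hfun_nonneg _ _)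
  have hGlint : ∫⁻ y in cube d, ENNReal.ofReal (G y) = ENNReal.ofReal c0 * Ψ := by
    rw [hΨ, ← lintegral_const_mul' _ _ ENNReal.ofReal_ne_top]
    congr 1
    funext y
    rw [← ENNReal.ofReal_mul hc00.le]
  have hGint : IntegrableOn G (cube d) := by
    constructor
    · exact hGmeas.aestronglyMeasurable
    · rw [hasFiniteIntegral_iff_ofReal (ae_of_all _ hGnn), hGlint]
      exact ENNReal.mul_lt_top ENNReal.ofReal_lt_top (lt_top_iff_ne_top.2 hΨfin)
  have hGval : ∫ y in cube d, G y = c0 * Ψ.toReal := by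
    rw [integral_eq_lintegral_of_nonneg_ae (ae_of_all _ hGnn) hGmeas.aestronglyMeasurable]
    rw [hGlint, ENNReal.toReal_mul, ENNReal.toReal_ofReal hc00.le]
  -- pointwise bound
  have hae : ∀ᵐ y ∂(volume.restrict (cube d)),
      (s * ∫ x in cube d, Real.exp (-(t * pvol (x ⊔ y))))^i ≤ G y := by
    filter_upwards [ae_restrict_mem measurableSet_cube, ae_pvol_pos d] with y hy hpy
    set a : ℝ := t * pvol y with ha
    have ha0 : 0 < a := by
      rw [ha]; exact mul_pos ht0 hpy
    set J : ℝ≥0∞ := ∫⁻ x in cube d, ENNReal.ofReal (Real.exp (-(t * pvol (x ⊔ y)))) with hJ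
    have hIr : ∫ x in cube d, Real.exp (-(t * pvol (x ⊔ y))) = J.toReal := by
      rw [integral_eq_lintegral_of_nonneg_ae (ae_of_all _ (fun x => (Real.exp_pos _).le))
        (measurable_expR t y).aestronglyMeasurable]
    have hAy := hA t ht0 y hy hpy
    have hfinJ : ENNReal.ofReal t * J ≠ ⊤ := ne_top_of_le_ne_top ENNReal.ofReal_ne_top hAy
    have hJfin : J ≠ ⊤ := by
      intro htop
      rw [htop, ENNReal.mul_top (by simpa using (ENNReal.ofReal_pos.2 ht0).ne')] at hfinJ
      exact hfinJ rfl
    have hJreal : t * J.toReal ≤ CA * (mlog a)^d * Real.exp (-a/2) := by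
      have h1 := (ENNReal.toReal_le_toReal hfinJ ENNReal.ofReal_ne_top).2 hAy
      rwa [ENNReal.toReal_mul, ENNReal.toReal_ofReal ht0.le, ENNReal.toReal_ofReal
        (mul_nonneg (mul_nonneg hCA.le (pow_nonneg (mlog_nonneg _) _)) (Real.exp_pos _).le)] at h1
    have hJnn : 0 ≤ J.toReal := ENNReal.toReal_nonneg
    have hf_le : s * ∫ x in cube d, Real.exp (-(t * pvol (x ⊔ y)))
        ≤ (CA * (mlog a)^d * Real.exp (-a/2)) / α := by
      rw [hIr, show s = t / α by rw [htdef]; field_simp, div_mul_eq_mul_div]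
      exact (div_le_div_iff_of_pos_right hα).2 hJreal
    have hfnn : 0 ≤ s * ∫ x in cube d, Real.exp (-(t * pvol (x ⊔ y))) :=
      mul_nonneg hs0.le (by rw [hIr]; exact ENNReal.toReal_nonneg)
    apply le_trans (pow_le_pow_left₀ hfnn hf_le i)
    have hE : Real.exp (-a/2) ≤ 1 := exp_neg_half_le_one ha0.le
    have hE0 : (0:ℝ) ≤ Real.exp (-a/2) := (Real.exp_pos _).le
    rw [show (CA * (mlog a)^d * Real.exp (-a/2)) / α
        = (CA/α) * ((mlog a)^d * Real.exp (-a/2)) by ring]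
    rw [mul_pow, hG, hc0]
    apply mul_le_mul_of_nonneg_left _ (by positivity)
    rw [mul_pow, ← pow_mul]
    rw [show hfun k a = (mlog a)^k * Real.exp (-a/2) from rfl, hk, Nat.mul_comm d i]
    apply mul_le_mul_of_nonneg_left _ (pow_nonneg (mlog_nonneg _) _)
    calc Real.exp (-a/2) ^ i ≤ Real.exp (-a/2) ^ 1 := pow_le_pow_of_le_one hE0 hE hi
      _ = Real.exp (-a/2) := pow_one _
  have hmono : ∫ y in cube d, (s * ∫ x in cube d, Real.exp (-(t * pvol (x ⊔ y))))^i
      ≤ ∫ y in cube d, G y :=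
    integral_mono_of_nonneg (ae_of_all _ (fun y => pow_nonneg (mul_nonneg hs0.le
      (integral_nonneg (fun x => (Real.exp_pos _).le))) i)) hGint hae
  calc s * ∫ y in cube d, (s * ∫ x in cube d, Real.exp (-(t * pvol (x ⊔ y))))^i
      ≤ s * ∫ y in cube d, G y := mul_le_mul_of_nonneg_left hmono hs0.le
    _ = (c0/α) * (t * Ψ.toReal) := by
        rw [hGval, htdef]
        field_simp
    _ ≤ (c0/α) * (D * P) := mul_le_mul_of_nonneg_left hψreal (by positivity)
    _ = ((c0 * D)/α) * P := by ring
end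

section
/- For every d ∈ ℕ, every α ∈ (0,1), every s > 0 and every x ∈ [0,1]^d: c_{1,s}(x)^α ≤ e^{−α s |x|} + c_{α,s}(x). -/
open MeasureTheory

lemma aux_integrable {d : ℕ} (c : ℝ) (hc : 0 ≤ c) (y : Fin d → ℝ) :
    IntegrableOn (Set.indicator {z : Fin d → ℝ | y ≤ z}
      (fun z => Real.exp (-(c * pvol z)))) (cube d) := by
  have hmeas : Measurable fun z : Fin d → ℝ => Real.exp (-(c * pvol z)) := by
    apply Real.measurable_exp.comp
    apply Measurable.neg
    apply Measurable.const_mul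
    exact Finset.measurable_prod _ fun j _ => measurable_pi_apply j
  have hset : MeasurableSet {z : Fin d → ℝ | y ≤ z} :=
    (measurableSet_Ici : MeasurableSet (Set.Ici y))
  have hconst : IntegrableOn (fun _ : Fin d → ℝ => (1 : ℝ)) (cube d) := by
    refine (integrableOn_const_iff (C := (1 : ℝ))).mpr (Or.inr ?_)
    exact (isCompact_Icc).measure_lt_top
  apply Integrable.mono' hconst ((hmeas.indicator hset).aestronglyMeasurable)
  filter_upwards [ae_restrict_mem (measurableSet_Icc : MeasurableSet (cube d))] with z hz
  have hz0 : 0 ≤ pvol z := Finset.prod_nonneg fun j _ => hz.1 j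
  rw [Set.indicator]
  split
  · rw [Real.norm_eq_abs, abs_of_pos (Real.exp_pos _)]
    exact Real.exp_le_one_iff.mpr (by nlinarith)
  · simp

lemma cAS_nonneg {d : ℕ} (α s : ℝ) (hs : 0 ≤ s) (y : Fin d → ℝ) : 0 ≤ cAS α s y := by
  apply mul_nonneg hs
  apply setIntegral_nonneg (measurableSet_Icc : MeasurableSet (cube d))
  intro z _
  exact Set.indicator_nonneg (fun _ _ => (Real.exp_pos _).le) z

/-- For every `α ∈ (0,1)`, `s > 0` and `x ∈ [0,1]^d`:
`c_{1,s}(x)^α ≤ e^{-α s |x|} + c_{α,s}(x)`. -/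
theorem stmt14 (d : ℕ) (hd : 1 ≤ d) (α : ℝ) (hα : α ∈ Set.Ioo (0 : ℝ) 1)
    (s : ℝ) (hs : 0 < s) (x : Fin d → ℝ) (hx : x ∈ cube d) :
    cAS 1 s x ^ α ≤ Real.exp (-(α * s * pvol x)) + cAS α s x := by
  obtain ⟨hα0, hα1⟩ := hα
  set a := cAS 1 s x with ha_def
  set cα := cAS α s x with hca_def
  set E := Real.exp (-(α * s * pvol x)) with hE_def
  set K := Real.exp (-((1 - α) * s * pvol x)) with hK_def
  set b := Real.exp (-(1 * s * pvol x)) with hb_def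
  have hE : 0 < E := Real.exp_pos _
  have hK : 0 < K := Real.exp_pos _
  have hb : 0 < b := Real.exp_pos _
  have hKE : K * E = b := by
    rw [hK_def, hE_def, hb_def, ← Real.exp_add]; ring_nf
  have ha : 0 ≤ a := cAS_nonneg 1 s hs.le x
  have hca : 0 ≤ cα := cAS_nonneg α s hs.le x
  -- key integral comparison: a ≤ K * cα
  have hkey : a ≤ K * cα := by
    rw [ha_def, hca_def, cAS, cAS, mul_left_comm]
    apply mul_le_mul_of_nonneg_left _ hs.le
    rw [← integral_const_mul]
    apply setIntegral_mono_on (aux_integrable (1 * s) (by linarith) x)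
      ((aux_integrable (α * s) (by positivity) x).const_mul K)
      (measurableSet_Icc : MeasurableSet (cube d))
    intro z hz
    by_cases hxz : x ≤ z
    · have h1 : Set.indicator {w : Fin d → ℝ | x ≤ w}
          (fun w => Real.exp (-(1 * s * pvol w))) z = Real.exp (-(1 * s * pvol z)) :=
        Set.indicator_of_mem hxz _
      have h2 : Set.indicator {w : Fin d → ℝ | x ≤ w}
          (fun w => Real.exp (-(α * s * pvol w))) z = Real.exp (-(α * s * pvol z)) :=
        Set.indicator_of_mem hxz _
      rw [h1, h2, hK_def, ← Real.exp_add, Real.exp_le_exp]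
      have hpv : pvol x ≤ pvol z := by
        apply Finset.prod_le_prod (fun j _ => hx.1 j) (fun j _ => hxz j)
      nlinarith [mul_le_mul_of_nonneg_left hpv (by nlinarith : (0:ℝ) ≤ (1 - α) * s)]
    · rw [Set.indicator_of_notMem hxz, Set.indicator_of_notMem hxz, mul_zero]
  -- AM-GM tangent inequality
  have hbα : b ^ α = E := by
    rw [hb_def, hE_def, ← Real.exp_mul]; congr 1; ring
  have hrw : a ^ α = (a / b) ^ α * E := by
    rw [← hbα, ← Real.mul_rpow (div_nonneg ha hb.le) hb.le, div_mul_cancel₀ a hb.ne']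
  rw [hrw]
  have hgm : (a / b) ^ α ≤ α * (a / b) + (1 - α) := by
    have := Real.geom_mean_le_arith_mean2_weighted (w₁ := α) (w₂ := 1 - α)
      (p₁ := a / b) (p₂ := 1) hα0.le (by linarith) (div_nonneg ha hb.le) zero_le_one (by ring)
    simpa using this
  have h3 : (a / b) ^ α * E ≤ (α * (a / b) + (1 - α)) * E :=
    mul_le_mul_of_nonneg_right hgm hE.le
  have h4 : a / b * E ≤ cα := by
    rw [div_mul_eq_mul_div, div_le_iff₀ hb]
    calc a * E ≤ K * cα * E := mul_le_mul_of_nonneg_right hkey hE.le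
    _ = cα * b := by rw [← hKE]; ring
  nlinarith [mul_le_mul_of_nonneg_left h4 hα0.le]
end
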